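/- arXiv:2602.04767 — 8 statements merged into one kernel-verified Lean document; each statement's English description precedes it below -/
import Mathlib

section
/- For any permutation π and integers d₁ < d₂ ≤ des(π), we have ls_{d₁}(π) < ls_{d₂}(π). -/
open List Finset

variable {α : Type*}

/-- The (1-based) descent set of a finite sequence, as a `Finset ℕ`. -/
def desSet [LinearOrder α] [Inhabited α] (l : List α) : Finset ℕ :=
  (Finset.Icc 1 (l.length - 1)).filter (fun i => l.getD i default < l.getD (i - 1) default)

/-- The number of descents of a finite sequence. -/
def desNum [LinearOrder α] [Inhabited α] (l : List α) : ℕ := (desSet l).card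

/-- The number of ascents of a finite sequence. -/
def ascNum [LinearOrder α] [Inhabited α] (l : List α) : ℕ :=
  ((Finset.Icc 1 (l.length - 1)).filter (fun i => l.getD (i - 1) default < l.getD i default)).card

/-- `lsd w d` : the maximum length of a subsequence of `w` with exactly `d` descents
(`0` if there is none). -/
noncomputable def lsd [LinearOrder α] [Inhabited α] (w : List α) (d : ℕ) : ℕ :=
  sSup {m | ∃ s : List α, s.Sublist w ∧ desNum s = d ∧ s.length = m}

/-- `lsD w D` : the maximum length of a subsequence of `w` whose descent set is exactly `D`
(`0` if there is none). -/
noncomputable def lsD [LinearOrder α] [Inhabited α] (w : List α) (D : Finset ℕ) : ℕ :=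
  sSup {m | ∃ s : List α, s.Sublist w ∧ desSet s = D ∧ s.length = m}

/-- The length of a longest (strictly) increasing subsequence. -/
noncomputable def lis [LinearOrder α] (w : List α) : ℕ :=
  sSup {m | ∃ s : List α, s.Sublist w ∧ s.Pairwise (· < ·) ∧ s.length = m}

/-- The length of a longest (strictly) decreasing subsequence. -/
noncomputable def lds [LinearOrder α] (w : List α) : ℕ :=
  sSup {m | ∃ s : List α, s.Sublist w ∧ s.Pairwise (· > ·) ∧ s.length = m}

/-- The one-line notation word of a permutation of `Fin n` (with values in `ℕ`). -/
def word {n : ℕ} (π : Equiv.Perm (Fin n)) : List ℕ := List.ofFn (fun i => (π i : ℕ))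

/-- The factor `w_{[a, b]}` of a word `w` (positions `a` through `b`, 1-based). -/
def factor (w : List α) (a b : ℕ) : List α := (w.drop (a - 1)).take (b - a + 1)

def dcount [LinearOrder α] : List α → ℕ
  | [] => 0
  | [_] => 0
  | a :: b :: l => (if b < a then 1 else 0) + dcount (b :: l)

lemma dcount_cons_cons [LinearOrder α] (a b : α) (l : List α) :
    dcount (a :: b :: l) = (if b < a then 1 else 0) + dcount (b :: l) := rfl

lemma desNum_eq_sum [LinearOrder α] [Inhabited α] (l : List α) :
    desNum l = ∑ i ∈ Finset.range (l.length - 1),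
      if l.getD (i+1) default < l.getD i default then 1 else 0 := by
  rw [desNum, desSet, Finset.card_filter, ← Finset.Ico_add_one_right_eq_Icc,
    Finset.sum_Ico_eq_sum_range]
  simp only [Nat.add_sub_cancel]
  refine Finset.sum_congr rfl fun i _ => ?_
  rw [Nat.add_comm 1 i, Nat.add_sub_cancel]

lemma dcount_eq_sum [LinearOrder α] [Inhabited α] : ∀ l : List α,
    dcount l = ∑ i ∈ Finset.range (l.length - 1),
      if l.getD (i+1) default < l.getD i default then 1 else 0
  | [] => by simp [dcount]
  | [a] => by simp [dcount]
  | a :: b :: l => by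
    rw [dcount_cons_cons, dcount_eq_sum (b :: l)]
    simp only [List.length_cons, Nat.add_sub_cancel]
    rw [Finset.sum_range_succ']
    simp only [List.getD_cons_succ, List.getD_cons_zero]
    omega

lemma desNum_eq_dcount [LinearOrder α] [Inhabited α] (l : List α) :
    desNum l = dcount l := by rw [desNum_eq_sum, dcount_eq_sum]

lemma dcount_insert [LinearOrder α] : ∀ (l₁ : List α) (x : α) (l₂ : List α),
    dcount (l₁ ++ l₂) ≤ dcount (l₁ ++ x :: l₂) ∧
    dcount (l₁ ++ x :: l₂) ≤ dcount (l₁ ++ l₂) + 1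
  | [], x, [] => by simp [dcount]
  | [], x, b :: l₂ => by
    simp only [List.nil_append, dcount_cons_cons]
    constructor
    · omega
    · split <;> omega
  | [a], x, [] => by
    simp only [List.cons_append, List.nil_append, dcount_cons_cons]
    simp [dcount]
    split <;> omega
  | [a], x, b :: l₂ => by
    simp only [List.cons_append, List.nil_append, dcount_cons_cons]
    have h1 : (if b < a then (1:ℕ) else 0) ≤
        (if x < a then (1:ℕ) else 0) + (if b < x then (1:ℕ) else 0) := by
      by_cases hba : b < a <;> by_cases hxa : x < a <;> by_cases hbx : b < x <;>
        simp only [hba, hxa, hbx, if_true, if_false] <;>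
        first
          | omega
          | exact absurd hba (not_lt.mpr ((le_of_not_gt hxa).trans (le_of_not_gt hbx)))
    have h2 : (if x < a then (1:ℕ) else 0) + (if b < x then (1:ℕ) else 0) ≤
        (if b < a then (1:ℕ) else 0) + 1 := by
      by_cases hba : b < a <;> by_cases hxa : x < a <;> by_cases hbx : b < x <;>
        simp only [hba, hxa, hbx, if_true, if_false] <;>
        first
          | omega
          | exact absurd (hbx.trans hxa) hba
    omega
  | a :: c :: l₁, x, l₂ => by
    have ih := dcount_insert (c :: l₁) x l₂
    simp only [List.cons_append] at ih ⊢
    rw [dcount_cons_cons, dcount_cons_cons]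
    omega

lemma sublist_decomp {s t : List α} (h : s.Sublist t) :
    t.length = s.length + 1 →
    ∃ (l₁ : List α) (x : α) (l₂ : List α), s = l₁ ++ l₂ ∧ t = l₁ ++ x :: l₂ := by
  induction h with
  | slnil => intro h; simp at h
  | @cons l₁ l₂ a h ih =>
    intro hl
    have hst : l₁ = l₂ := h.eq_of_length (by simp at hl; omega)
    exact ⟨[], a, l₁, by simp, by simp [hst]⟩
  | @cons_cons l₁ l₂ a h ih =>
    intro hl
    obtain ⟨m₁, x, m₂, h1, h2⟩ := ih (by simpa using hl)
    exact ⟨a :: m₁, x, m₂, by simp [h1], by simp [h2]⟩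

lemma dcount_step [LinearOrder α] {s t : List α} (h : s.Sublist t)
    (hl : t.length = s.length + 1) :
    dcount s ≤ dcount t ∧ dcount t ≤ dcount s + 1 := by
  obtain ⟨l₁, x, l₂, h1, h2⟩ := sublist_decomp h hl
  subst h1; subst h2
  exact dcount_insert l₁ x l₂

lemma exists_mid {s t : List α} (h : s.Sublist t) :
    s.length < t.length →
    ∃ u : List α, s.Sublist u ∧ u.Sublist t ∧ u.length = s.length + 1 := by
  induction h with
  | slnil => intro h; simp at h
  | @cons l₁ l₂ a h ih =>
    intro hl
    by_cases hc : l₁.length < l₂.length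
    · obtain ⟨u, h1, h2, h3⟩ := ih hc
      exact ⟨u, h1, h2.cons a, h3⟩
    · have he : l₁ = l₂ := h.eq_of_length (by simp at hl; omega)
      subst he
      exact ⟨a :: l₁, List.sublist_cons_self a l₁, h.cons₂ a, by simp⟩
  | @cons_cons l₁ l₂ a h ih =>
    intro hl
    obtain ⟨u, h1, h2, h3⟩ := ih (by simpa using hl)
    exact ⟨a :: u, h1.cons₂ a, h2.cons₂ a, by simp [h3]⟩

lemma exists_dcount [LinearOrder α] : ∀ (t : List α) (d : ℕ), d ≤ dcount t →
    ∃ s : List α, s.Sublist t ∧ dcount s = d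
  | [], d, hd => ⟨[], List.Sublist.refl _, by simp [dcount] at hd ⊢; omega⟩
  | a :: t, d, hd => by
    rcases eq_or_lt_of_le hd with heq | hlt
    · exact ⟨a :: t, List.Sublist.refl _, heq.symm⟩
    · have hb : dcount (a :: t) ≤ dcount t + 1 := by
        cases t with
        | nil => simp [dcount]
        | cons b t' => rw [dcount_cons_cons]; split <;> omega
      obtain ⟨s, h1, h2⟩ := exists_dcount t d (by omega)
      exact ⟨s, h1.cons a, h2⟩

lemma lsd_step [LinearOrder α] [Inhabited α] (w : List α) (d : ℕ)
    (hd : d + 1 ≤ desNum w) : lsd w d < lsd w (d + 1) := by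
  have hbdd : ∀ k : ℕ,
      BddAbove {m | ∃ s : List α, s.Sublist w ∧ desNum s = k ∧ s.length = m} :=
    fun k => ⟨w.length, fun m ⟨s, hs, _, hl⟩ => hl ▸ hs.length_le⟩
  have hdw : d + 1 ≤ dcount w := by rwa [desNum_eq_dcount] at hd
  have hne : {m | ∃ s : List α, s.Sublist w ∧ desNum s = d ∧ s.length = m}.Nonempty := by
    obtain ⟨s, h1, h2⟩ := exists_dcount w d (by omega)
    exact ⟨s.length, s, h1, by rw [desNum_eq_dcount]; exact h2, rfl⟩
  obtain ⟨s, hsub, hdes, hlen⟩ := Nat.sSup_mem hne (hbdd d)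
  rw [desNum_eq_dcount] at hdes
  have hlt : s.length < w.length := by
    rcases lt_or_eq_of_le hsub.length_le with h | h
    · exact h
    · exfalso
      have := hsub.eq_of_length h
      subst this
      omega
  obtain ⟨u, hsu, huw, hul⟩ := exists_mid hsub hlt
  have hstep := dcount_step hsu hul
  have hcase : dcount u = d ∨ dcount u = d + 1 := by omega
  rcases hcase with h | h
  · exfalso
    have hmem2 : u.length ∈ {m | ∃ s : List α, s.Sublist w ∧ desNum s = d ∧ s.length = m} :=
      ⟨u, huw, by rw [desNum_eq_dcount]; exact h, rfl⟩
    have := le_csSup (hbdd d) hmem2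
    omega
  · have hmem2 : u.length ∈ {m | ∃ s : List α, s.Sublist w ∧ desNum s = d + 1 ∧ s.length = m} :=
      ⟨u, huw, by rw [desNum_eq_dcount]; exact h, rfl⟩
    have hle := le_csSup (hbdd (d + 1)) hmem2
    show sSup _ < sSup _
    omega

theorem stmt2 (n : ℕ) (π : Equiv.Perm (Fin n)) (d₁ d₂ : ℕ) (h12 : d₁ < d₂)
    (h2 : d₂ ≤ desNum (word π)) : lsd (word π) d₁ < lsd (word π) d₂ := by
  have key : ∀ e, d₁ + 1 ≤ e → e ≤ desNum (word π) → lsd (word π) d₁ < lsd (word π) e := by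
    intro e he
    induction he with
    | refl => intro h; exact lsd_step _ _ h
    | @step e' he' ih =>
      intro h
      exact lt_trans (ih (by omega)) (lsd_step _ _ (by omega))
  exact key d₂ h12 h2
end

section
/- For any permutation π and any d with 0 ≤ d ≤ des(π), ls_d(π) ≤ asc(π) + d + 1, where asc(π) is the number of ascents of π. -/
open List Finset

variable {α : Type*}

section Aux

/-- Recursive count of ascents. -/
def caux {α : Type*} [LinearOrder α] : List α → ℕ
  | a :: b :: t => (if a < b then 1 else 0) + caux (b :: t)
  | _ => 0

/-- Recursive count of descents. -/
def cdux {α : Type*} [LinearOrder α] : List α → ℕ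
  | a :: b :: t => (if b < a then 1 else 0) + cdux (b :: t)
  | _ => 0

lemma caux_cons_le {α : Type*} [LinearOrder α] (x : α) (l : List α) :
    caux l ≤ caux (x :: l) := by
  cases l with
  | nil => simp [caux]
  | cons b t => simp [caux]

lemma caux_cons_le' {α : Type*} [LinearOrder α] (x : α) (l : List α) :
    caux (x :: l) ≤ 1 + caux l := by
  cases l with
  | nil => simp [caux]
  | cons b t =>
    simp only [caux]
    split <;> omega

lemma caux_sublist_cons {α : Type*} [LinearOrder α] {s w : List α} (h : s.Sublist w) :
    ∀ x : α, caux (x :: s) ≤ caux (x :: w) := by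
  induction h with
  | slnil => intro x; simp [caux]
  | @cons s w a h ih =>
    intro x
    cases s with
    | nil => simp [caux]
    | cons c t =>
      have h1 : caux (c :: t) ≤ caux (a :: w) := le_trans (caux_cons_le a _) (ih a)
      by_cases hxa : x < a
      · by_cases hxc : x < c
        · simp only [caux, if_pos hxa, if_pos hxc]; omega
        · simp only [caux, if_pos hxa, if_neg hxc]; omega
      · by_cases hxc : x < c
        · have hac : a < c := lt_of_le_of_lt (not_lt.mp hxa) hxc
          have h2 := ih a
          simp only [caux, if_pos hxc, if_neg hxa, if_pos hac] at h2 ⊢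
          omega
        · simp only [caux, if_neg hxc, if_neg hxa]
          omega
  | @cons_cons s w a h ih =>
    intro x
    simp only [caux]
    exact Nat.add_le_add_left (ih a) _

lemma caux_mono {α : Type*} [LinearOrder α] {s w : List α} (h : s.Sublist w) :
    caux s ≤ caux w := by
  induction h with
  | slnil => exact le_refl _
  | @cons s w a h ih => exact le_trans ih (caux_cons_le a w)
  | @cons_cons s w a h ih => exact caux_sublist_cons h a

lemma Icc_one_eq_image (m : ℕ) : Finset.Icc 1 m = (Finset.range m).image (· + 1) := by
  ext x
  simp only [Finset.mem_Icc, Finset.mem_image, Finset.mem_range]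
  constructor
  · rintro ⟨h1, h2⟩; exact ⟨x - 1, by omega, by omega⟩
  · rintro ⟨a, ha, rfl⟩; omega

lemma card_filter_Icc (m : ℕ) (P : ℕ → Prop) [DecidablePred P] :
    ((Finset.Icc 1 m).filter P).card = ((Finset.range m).filter (fun j => P (j + 1))).card := by
  rw [Icc_one_eq_image, Finset.filter_image]
  exact Finset.card_image_of_injective _ (fun a b => by omega)

lemma G_eq_caux {α : Type*} [LinearOrder α] [Inhabited α] : ∀ l : List α,
    ((Finset.range (l.length - 1)).filter
      (fun j => l.getD j default < l.getD (j + 1) default)).card = caux l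
  | [] => by simp [caux]
  | [a] => by simp [caux]
  | a :: b :: t => by
    have ih := G_eq_caux (b :: t)
    simp only [List.length_cons, Nat.add_sub_cancel] at *
    rw [Finset.card_filter, Finset.sum_range_succ']
    rw [Finset.card_filter] at ih
    simp only [List.getD_cons_succ, List.getD_cons_zero] at ih ⊢
    rw [ih]
    simp only [caux]
    omega

lemma G_eq_cdux {α : Type*} [LinearOrder α] [Inhabited α] : ∀ l : List α,
    ((Finset.range (l.length - 1)).filter
      (fun j => l.getD (j + 1) default < l.getD j default)).card = cdux l
  | [] => by simp [cdux]
  | [a] => by simp [cdux]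
  | a :: b :: t => by
    have ih := G_eq_cdux (b :: t)
    simp only [List.length_cons, Nat.add_sub_cancel] at *
    rw [Finset.card_filter, Finset.sum_range_succ']
    rw [Finset.card_filter] at ih
    simp only [List.getD_cons_succ, List.getD_cons_zero] at ih ⊢
    rw [ih]
    simp only [cdux]
    omega

lemma ascNum_eq_caux {α : Type*} [LinearOrder α] [Inhabited α] (l : List α) :
    ascNum l = caux l := by
  rw [ascNum, card_filter_Icc]
  simp only [Nat.add_sub_cancel]
  exact G_eq_caux l

lemma desNum_eq_cdux {α : Type*} [LinearOrder α] [Inhabited α] (l : List α) :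
    desNum l = cdux l := by
  rw [desNum, desSet, card_filter_Icc]
  simp only [Nat.add_sub_cancel]
  exact G_eq_cdux l

lemma caux_add_cdux {α : Type*} [LinearOrder α] : ∀ l : List α, l.Chain' (· ≠ ·) →
    caux l + cdux l = l.length - 1
  | [] => by simp [caux, cdux]
  | [a] => by simp [caux, cdux]
  | a :: b :: t => fun h => by
    have hab : a ≠ b := (List.isChain_cons_cons.mp h).1
    have ih := caux_add_cdux (b :: t) (List.isChain_cons_cons.mp h).2
    simp only [caux, cdux, List.length_cons] at *
    rcases lt_or_gt_of_ne hab with h' | h'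
    · rw [if_pos h', if_neg (not_lt.mpr h'.le)]; omega
    · rw [if_neg (not_lt.mpr h'.le), if_pos h']; omega

end Aux

theorem stmt5 (n : ℕ) (π : Equiv.Perm (Fin n)) (d : ℕ) (hd : d ≤ desNum (word π)) :
    lsd (word π) d ≤ ascNum (word π) + d + 1 := by
  apply csSup_le'
  rintro m ⟨s, hsub, hdes, hlen⟩
  have hw : (word π).Nodup := by
    rw [word]
    exact List.nodup_ofFn.mpr (Fin.val_injective.comp π.injective)
  have hs : s.Nodup := hsub.nodup hw
  have hc : s.Chain' (· ≠ ·) := hs.isChain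
  have h1 : caux s + cdux s = s.length - 1 := caux_add_cdux s hc
  have h2 : caux s ≤ caux (word π) := caux_mono hsub
  have h3 : desNum s = cdux s := desNum_eq_cdux s
  have h4 : ascNum (word π) = caux (word π) := ascNum_eq_caux _
  rcases s with _ | ⟨a, t⟩
  · have hm : m = 0 := by simpa using hlen.symm
    omega
  · have : (a :: t).length ≥ 1 := by simp
    omega
end

section
/- For any permutation π with des(π) ≥ 1 and asc(π) ≥ is(π), there exists a subsequence of π of length is(π) + 2 with exactly one descent; that is, ls_1(π) ≥ is(π) + 2. -/
open List Finset

variable {α : Type*}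

section Helpers

open List

lemma take_rel' {β : Type*} {R : β → β → Prop} {q : List β} (h : q.Pairwise R) {t : ℕ}
    (ht : t < q.length) : ∀ a ∈ q.take (t + 1), a = q[t] ∨ R a q[t] := by
  intro a ha
  obtain ⟨j, hj, rfl⟩ := List.getElem_of_mem ha
  rw [List.getElem_take]
  have hj' : j ≤ t := by
    have := hj; simp [List.length_take] at this; omega
  rcases eq_or_lt_of_le hj' with h' | h'
  · left; subst h'; rfl
  · right; exact (List.pairwise_iff_getElem.mp h) j t _ _ h'

lemma drop_rel' {β : Type*} {R : β → β → Prop} {q : List β} (h : q.Pairwise R) {s : ℕ}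
    (hs : s < q.length) : ∀ b ∈ q.drop s, b = q[s] ∨ R q[s] b := by
  intro b hb
  obtain ⟨j, hj, rfl⟩ := List.getElem_of_mem hb
  rw [List.getElem_drop]
  rcases Nat.eq_zero_or_pos j with h' | h'
  · left; subst h'; rfl
  · right
    exact (List.pairwise_iff_getElem.mp h) s (s + j) (by simp at hj ⊢; omega)
      (by simp at hj ⊢; omega) (by omega)

lemma desSet_two_runs {u v : List ℕ} (hu : u.Pairwise (· < ·)) (hv : v.Pairwise (· < ·))
    (hu0 : u ≠ []) (hv0 : v ≠ []) (hlt : v.head hv0 < u.getLast hu0) :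
    desSet (u ++ v) = {u.length} := by
  have hul : 0 < u.length := List.length_pos_iff.2 hu0
  have hvl : 0 < v.length := List.length_pos_iff.2 hv0
  ext i
  simp only [desSet, Finset.mem_filter, Finset.mem_Icc, Finset.mem_singleton, List.length_append]
  constructor
  · rintro ⟨⟨h1, h2⟩, h3⟩
    by_contra hne
    rcases lt_or_gt_of_ne hne with hlt' | hgt
    · have e1 : (u ++ v).getD i default = u.getD i default := List.getD_append _ _ _ _ hlt'
      have e2 : (u ++ v).getD (i-1) default = u.getD (i-1) default :=
        List.getD_append _ _ _ _ (by omega)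
      have hb1 : i - 1 < u.length := by omega
      have h4 : u.getD (i-1) default < u.getD i default := by
        rw [List.getD_eq_getElem _ _ hlt', List.getD_eq_getElem _ _ hb1]
        exact List.pairwise_iff_getElem.mp hu _ _ hb1 hlt' (by omega)
      rw [e1, e2] at h3; omega
    · have hle : u.length ≤ i - 1 := by omega
      have e1 : (u ++ v).getD i default = v.getD (i - u.length) default :=
        List.getD_append_right _ _ _ _ (by omega)
      have e2 : (u ++ v).getD (i-1) default = v.getD (i - 1 - u.length) default :=
        List.getD_append_right _ _ _ _ hle
      have hb1 : i - 1 - u.length < v.length := by omega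
      have hb2 : i - u.length < v.length := by omega
      have h4 : v.getD (i-1-u.length) default < v.getD (i - u.length) default := by
        rw [List.getD_eq_getElem _ _ hb1, List.getD_eq_getElem _ _ hb2]
        exact List.pairwise_iff_getElem.mp hv _ _ hb1 hb2 (by omega)
      rw [e1, e2] at h3; omega
  · rintro rfl
    refine ⟨⟨by omega, by omega⟩, ?_⟩
    have e1 : (u ++ v).getD u.length default = v.head hv0 := by
      rw [List.getD_append_right _ _ _ _ le_rfl, Nat.sub_self, List.getD_eq_getElem _ _ hvl,
        List.head_eq_getElem]
    have e2 : (u ++ v).getD (u.length - 1) default = u.getLast hu0 := by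
      rw [List.getD_append _ _ _ _ (by omega), List.getD_eq_getElem _ _ (by omega),
        List.getLast_eq_getElem]
    rw [e1, e2]; exact hlt

lemma desNum_two_runs {u v : List ℕ} (hu : u.Pairwise (· < ·)) (hv : v.Pairwise (· < ·))
    (hu0 : u ≠ []) (hv0 : v ≠ []) (hlt : v.head hv0 < u.getLast hu0) :
    desNum (u ++ v) = 1 := by
  rw [desNum, desSet_two_runs hu hv hu0 hv0 hlt, Finset.card_singleton]

lemma lis_bddAbove (w : List ℕ) :
    BddAbove {m | ∃ s : List ℕ, s.Sublist w ∧ s.Pairwise (· < ·) ∧ s.length = m} := by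
  refine ⟨w.length, fun m hm => ?_⟩
  obtain ⟨s, hs, _, rfl⟩ := hm
  exact hs.length_le

lemma length_le_lis {w : List ℕ} {I : List (Fin w.length)} (hp : I.Pairwise (· < ·))
    (hv : I.Pairwise (fun i j => w[i] < w[j])) : I.length ≤ lis w := by
  apply le_csSup (lis_bddAbove w)
  exact ⟨I.map (w[·]), List.map_getElem_sublist hp, List.pairwise_map.2 hv, by simp⟩

lemma exists_lis_chain (w : List ℕ) : ∃ I : List (Fin w.length), I.Pairwise (· < ·) ∧
    I.Pairwise (fun i j => w[i] < w[j]) ∧ I.length = lis w := by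
  have hne : {m | ∃ s : List ℕ, s.Sublist w ∧ s.Pairwise (· < ·) ∧ s.length = m}.Nonempty :=
    ⟨0, [], by simp⟩
  have hmem := Nat.sSup_mem hne (lis_bddAbove w)
  obtain ⟨s, hs, hsort, hlen⟩ := hmem
  obtain ⟨I, hI, hp⟩ := List.sublist_eq_map_getElem hs
  subst hI
  exact ⟨I, hp, List.pairwise_map.1 hsort, by simpa [lis] using hlen⟩

lemma build_witness {w : List ℕ} {I₁ I₂ : List (Fin w.length)}
    (h1p : I₁.Pairwise (· < ·)) (h2p : I₂.Pairwise (· < ·))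
    (hsep : ∀ a ∈ I₁, ∀ b ∈ I₂, a < b)
    (hv1 : I₁.Pairwise (fun i j => w[i] < w[j])) (hv2 : I₂.Pairwise (fun i j => w[i] < w[j]))
    (h1 : I₁ ≠ []) (h2 : I₂ ≠ [])
    (hdrop : w[I₂.head h2] < w[I₁.getLast h1]) :
    ∃ s : List ℕ, s.Sublist w ∧ desNum s = 1 ∧ s.length = I₁.length + I₂.length := by
  refine ⟨(I₁ ++ I₂).map (w[·]), List.map_getElem_sublist ?_, ?_, by simp⟩
  · rw [List.pairwise_append]; exact ⟨h1p, h2p, hsep⟩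
  · rw [List.map_append]
    have hu0 : I₁.map (w[·]) ≠ [] := by simpa using h1
    have hv0 : I₂.map (w[·]) ≠ [] := by simpa using h2
    refine desNum_two_runs (List.pairwise_map.2 hv1) (List.pairwise_map.2 hv2) hu0 hv0 ?_
    rw [List.head_map, List.getLast_map]
    exact hdrop

lemma getLast_take' {β : Type*} {q : List β} {t : ℕ} (ht : t < q.length) (h : q.take (t+1) ≠ []) :
    (q.take (t+1)).getLast h = q[t] := by
  rw [List.getLast_take, List.getElem?_eq_getElem (show t + 1 - 1 < q.length by omega)]
  rfl

lemma head_rel' {β : Type*} {R : β → β → Prop} {q : List β} (h : q.Pairwise R) (hne : q ≠ []) :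
    ∀ b ∈ q, b = q.head hne ∨ R (q.head hne) b := by
  intro b hb
  have h0 : 0 < q.length := List.length_pos_iff.2 hne
  have := drop_rel' h h0 b (by simpa using hb)
  rwa [← List.head_eq_getElem] at this

lemma getLast_rel' {β : Type*} {R : β → β → Prop} {q : List β} (h : q.Pairwise R) (hne : q ≠ []) :
    ∀ a ∈ q, a = q.getLast hne ∨ R a (q.getLast hne) := by
  intro a ha
  have h0 : 0 < q.length := List.length_pos_iff.2 hne
  have ht : q.length - 1 < q.length := by omega
  have := take_rel' h ht a (by rw [Nat.sub_add_cancel h0, List.take_length]; exact ha)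
  rwa [← List.getLast_eq_getElem] at this

lemma lsd_ge {w : List ℕ} {s : List ℕ} (hs : s.Sublist w) (hd : desNum s = 1) :
    s.length ≤ lsd w 1 := by
  apply le_csSup
  · refine ⟨w.length, fun m hm => ?_⟩
    obtain ⟨s', hs', _, rfl⟩ := hm
    exact hs'.length_le
  · exact ⟨s, hs, hd, rfl⟩

end Helpers

set_option maxHeartbeats 4000000 in
theorem stmt8 (n : ℕ) (π : Equiv.Perm (Fin n)) (hdes : 1 ≤ desNum (word π))
    (hasc : lis (word π) ≤ ascNum (word π)) :
    (∃ s : List ℕ, s.Sublist (word π) ∧ desNum s = 1 ∧ s.length = lis (word π) + 2) ∧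
      lis (word π) + 2 ≤ lsd (word π) 1 := by
  classical
  set w := word π with hw
  have hN2 : 2 ≤ w.length := by
    by_contra h
    have hds : desSet w = ∅ := by
      apply Finset.eq_empty_of_forall_notMem
      intro i hi
      simp only [desSet, Finset.mem_filter, Finset.mem_Icc] at hi
      omega
    rw [desNum, hds] at hdes
    simp at hdes
  have hnd : w.Nodup := by
    rw [hw, word]
    exact List.nodup_ofFn.2 (Fin.val_injective.comp π.injective)
  have hinj : ∀ i j : Fin w.length, w[i] = w[j] → i = j := by
    intro i j h
    exact Fin.ext (hnd.getElem_inj_iff.mp h)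
  have hstrict : ∀ p r : Fin w.length, w[p] ≤ w[r] → p ≠ r → w[p] < w[r] :=
    fun p r hle hne => lt_of_le_of_ne hle (fun h => hne (hinj p r h))
  obtain ⟨q, hqp, hqv, hqlen⟩ := exists_lis_chain w
  have hk1 : 1 ≤ lis w := by
    have h0 : 0 < w.length := by omega
    exact le_csSup (lis_bddAbove w)
      ⟨[w[0]], List.singleton_sublist.2 (List.getElem_mem h0), List.pairwise_singleton _ _, rfl⟩
  have hqne : q ≠ [] := List.length_pos_iff.1 (by omega)
  suffices hmain : ∃ s : List ℕ, s.Sublist w ∧ desNum s = 1 ∧ s.length = lis w + 2 by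
    obtain ⟨s, hs, hd, hl⟩ := hmain
    refine ⟨⟨s, hs, hd, hl⟩, ?_⟩
    rw [← hl]
    exact lsd_ge hs hd
  set A := (Finset.Icc 1 (w.length - 1)).filter
      (fun i => w.getD (i - 1) default < w.getD i default) with hA
  have hcardA : lis w ≤ A.card := hasc
  have hAsc : ∀ i ∈ A, 1 ≤ i ∧ i < w.length ∧ w.getD (i-1) default < w.getD i default := by
    intro i hi
    rw [hA, Finset.mem_filter, Finset.mem_Icc] at hi
    exact ⟨hi.1.1, by omega, hi.2⟩
  have hascv : ∀ i, 1 ≤ i → ∀ (h1 : i - 1 < w.length) (h2 : i < w.length),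
      w.getD (i-1) default < w.getD i default → w[i-1] < w[i] := by
    intro i h0 h1 h2 h3
    rwa [List.getD_eq_getElem _ _ h1, List.getD_eq_getElem _ _ h2] at h3
  -- Case 1 : an ascent entirely before (or touching) the head of the chain
  by_cases hc1 : ∃ i ∈ A, i ≤ (q.head hqne).val
  · obtain ⟨i, hiA, hile⟩ := hc1
    obtain ⟨hi1, hiN, hiv⟩ := hAsc i hiA
    set j' : Fin w.length := ⟨i - 1, by omega⟩ with hj'
    set i' : Fin w.length := ⟨i, hiN⟩ with hi'
    have hj'v : (j' : ℕ) = i - 1 := rfl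
    have hi'v : (i' : ℕ) = i := rfl
    have hji : w[j'] < w[i'] := hascv i hi1 (by omega) hiN hiv
    have hprep : ∀ p : Fin w.length, p < q.head hqne → w[p] < w[q.head hqne] → False := by
      intro p hp hpv
      have h1 : (p :: q).Pairwise (· < ·) := List.pairwise_cons.2
        ⟨fun b hb => by
          rcases head_rel' hqp hqne b hb with rfl | h
          exacts [hp, lt_trans hp h], hqp⟩
      have h2 : (p :: q).Pairwise (fun i j => w[i] < w[j]) := List.pairwise_cons.2
        ⟨fun b hb => by
          rcases head_rel' hqv hqne b hb with rfl | h
          exacts [hpv, lt_trans hpv h], hqv⟩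
      have := length_le_lis h1 h2
      simp only [List.length_cons, hqlen] at this
      omega
    have hj_lt : j' < q.head hqne := Fin.lt_def.2 (by omega)
    have hq0j : w[q.head hqne] < w[j'] := by
      refine hstrict _ _ (not_lt.1 (fun h => hprep j' hj_lt h)) ?_
      intro h
      rw [h] at hj_lt
      exact lt_irrefl _ hj_lt
    have hi_lt : i < (q.head hqne).val := by
      rcases eq_or_lt_of_le hile with h | h
      · exfalso
        have he : i' = q.head hqne := Fin.ext h
        rw [← he] at hq0j
        exact lt_irrefl _ (lt_trans hq0j hji)
      · exact h
    obtain ⟨s, hs, hd, hl⟩ := build_witness (w := w) (I₁ := [j', i']) (I₂ := q)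
      (by
        refine List.pairwise_cons.2 ⟨?_, List.pairwise_singleton _ _⟩
        intro b hb
        rw [List.mem_singleton] at hb
        subst hb
        exact Fin.lt_def.2 (by omega))
      hqp
      (by
        intro p hp b hb
        have hpb : p.val < (q.head hqne).val := by
          rw [List.mem_cons, List.mem_singleton] at hp
          rcases hp with rfl | rfl
          · omega
          · omega
        rcases head_rel' hqp hqne b hb with rfl | h
        · exact Fin.lt_def.2 hpb
        · exact lt_trans (Fin.lt_def.2 hpb) h)
      (by
        refine List.pairwise_cons.2 ⟨?_, List.pairwise_singleton _ _⟩
        intro b hb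
        rw [List.mem_singleton] at hb
        subst hb
        exact hji)
      hqv
      (by simp) hqne
      (by
        show w[q.head hqne] < w[([j', i'].getLast (by simp))]
        exact lt_trans hq0j hji)
    exact ⟨s, hs, hd, by
      simp only [List.length_cons, List.length_nil, hqlen] at hl
      omega⟩
  by_cases hc2 : ∃ i ∈ A, (q.getLast hqne).val < i
  · obtain ⟨i, hiA, hlti⟩ := hc2
    obtain ⟨hi1, hiN, hiv⟩ := hAsc i hiA
    set j' : Fin w.length := ⟨i - 1, by omega⟩ with hj'
    set i' : Fin w.length := ⟨i, hiN⟩ with hi'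
    have hj'v : (j' : ℕ) = i - 1 := rfl
    have hi'v : (i' : ℕ) = i := rfl
    have hji : w[j'] < w[i'] := hascv i hi1 (by omega) hiN hiv
    have happ : ∀ p : Fin w.length, q.getLast hqne < p → w[q.getLast hqne] < w[p] → False := by
      intro p hp hpv
      have h1 : (q ++ [p]).Pairwise (· < ·) := List.pairwise_append.2
        ⟨hqp, List.pairwise_singleton _ _, by
          intro a ha b hb
          rw [List.mem_singleton] at hb
          subst hb
          rcases getLast_rel' hqp hqne a ha with rfl | h
          exacts [hp, lt_trans h hp]⟩
      have h2 : (q ++ [p]).Pairwise (fun i j => w[i] < w[j]) := List.pairwise_append.2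
        ⟨hqv, List.pairwise_singleton _ _, by
          intro a ha b hb
          rw [List.mem_singleton] at hb
          subst hb
          rcases getLast_rel' hqv hqne a ha with rfl | h
          exacts [hpv, lt_trans h hpv]⟩
      have := length_le_lis h1 h2
      simp only [List.length_append, List.length_cons, List.length_nil, hqlen] at this
      omega
    have hlast_i : (q.getLast hqne) < i' := Fin.lt_def.2 (by omega)
    have hivlt : w[i'] < w[q.getLast hqne] := by
      refine hstrict _ _ (not_lt.1 (fun h => happ i' hlast_i h)) ?_
      intro h
      rw [h] at hlast_i
      exact lt_irrefl _ hlast_i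
    have hlast_j : (q.getLast hqne) < j' := by
      rcases eq_or_lt_of_le (show (q.getLast hqne).val ≤ i - 1 by omega) with h | h
      · exfalso
        have he : q.getLast hqne = j' := Fin.ext h
        simp only [he] at hivlt
        exact lt_irrefl _ (lt_trans hji hivlt)
      · exact Fin.lt_def.2 (by omega)
    have hljv : (q.getLast hqne).val < (j' : ℕ) := Fin.lt_def.1 hlast_j
    have hjlt : w[j'] < w[q.getLast hqne] := lt_trans hji hivlt
    obtain ⟨s, hs, hd, hl⟩ := build_witness (w := w) (I₁ := q) (I₂ := [j', i'])
      hqp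
      (by
        refine List.pairwise_cons.2 ⟨?_, List.pairwise_singleton _ _⟩
        intro b hb
        rw [List.mem_singleton] at hb
        subst hb
        exact Fin.lt_def.2 (by omega))
      (by
        intro a ha b hb
        rw [List.mem_cons, List.mem_singleton] at hb
        have hbv : (q.getLast hqne).val < b.val := by
          rcases hb with rfl | rfl
          · omega
          · omega
        rcases getLast_rel' hqp hqne a ha with rfl | h
        · exact Fin.lt_def.2 hbv
        · exact lt_trans h (Fin.lt_def.2 hbv))
      hqv
      (by
        refine List.pairwise_cons.2 ⟨?_, List.pairwise_singleton _ _⟩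
        intro b hb
        rw [List.mem_singleton] at hb
        subst hb
        exact hji)
      hqne (by simp)
      (by
        show w[([j', i'].head (by simp))] < w[q.getLast hqne]
        exact hjlt)
    exact ⟨s, hs, hd, by
      simp only [List.length_cons, List.length_nil, hqlen] at hl
      omega⟩
  push_neg at hc1 hc2
  set T : ℕ → Finset ℕ := fun i =>
    (Finset.range q.length).filter (fun t => (q.getD t (q.head hqne)).val < i) with hT
  have hgetD : ∀ t (ht : t < q.length), q.getD t (q.head hqne) = q[t]'ht :=
    fun t ht => List.getD_eq_getElem _ _ ht
  have hglast : ∀ (t : ℕ) (ht : t < q.length), t = q.length - 1 →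
      q[t]'ht = q.getLast hqne := by
    intro t ht hte
    subst hte
    exact (List.getLast_eq_getElem _).symm
  have hTmem0 : ∀ i ∈ A, 0 ∈ T i := by
    intro i hi
    rw [hT]
    simp only [Finset.mem_filter, Finset.mem_range]
    refine ⟨by omega, ?_⟩
    rw [hgetD 0 (by omega), ← List.head_eq_getElem]
    exact hc1 i hi
  set f : ℕ → ℕ := fun i => (insert 0 (T i)).max' (Finset.insert_nonempty _ _) with hf
  have hfT : ∀ i ∈ A, f i ∈ T i := by
    intro i hi
    have h0 := hTmem0 i hi
    have hm : f i ∈ insert 0 (T i) := by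
      rw [hf]
      exact Finset.max'_mem _ _
    rcases Finset.mem_insert.1 hm with h | h
    · rw [h]
      exact h0
    · exact h
  have hfub : ∀ i, ∀ x ∈ T i, x ≤ f i := fun i x hx =>
    Finset.le_max' _ x (Finset.mem_insert_of_mem hx)
  have hfacts : ∀ i ∈ A, f i + 1 < q.length ∧
      (q.getD (f i) (q.head hqne)).val < i ∧ i ≤ (q.getD (f i + 1) (q.head hqne)).val := by
    intro i hi
    have hmem := hfT i hi
    rw [hT] at hmem
    simp only [Finset.mem_filter, Finset.mem_range] at hmem
    obtain ⟨hr, hv⟩ := hmem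
    have hne1 : f i ≠ q.length - 1 := by
      intro he
      have h2 := hc2 i hi
      have hgl : q.getD (f i) (q.head hqne) = q.getLast hqne := by
        rw [hgetD _ hr, hglast (f i) hr he]
      rw [hgl] at hv
      omega
    have hlt : f i + 1 < q.length := by omega
    refine ⟨hlt, hv, ?_⟩
    by_contra hcon
    push_neg at hcon
    have hmem2 : f i + 1 ∈ T i := by
      rw [hT]
      simp only [Finset.mem_filter, Finset.mem_range]
      exact ⟨hlt, hcon⟩
    have := hfub i _ hmem2
    omega
  have hpig := Finset.exists_ne_map_eq_of_card_lt_of_maps_to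
    (s := A) (t := Finset.range (q.length - 1))
    (by rw [Finset.card_range]; omega)
    (f := f)
    (fun i hi => Finset.mem_range.2 (by have := (hfacts i hi).1; omega))
  obtain ⟨a₀, ha₀, b₀, hb₀, hne₀, hfeq₀⟩ := hpig
  have key : ∀ a b : ℕ, a ∈ A → b ∈ A → a < b → f a = f b →
      ∃ s : List ℕ, s.Sublist w ∧ desNum s = 1 ∧ s.length = lis w + 2 := by
    intro a b haA hbA hab hfeq
    obtain ⟨ht1, hta, hta1⟩ := hfacts a haA
    obtain ⟨-, htb, htb1⟩ := hfacts b hbA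
    rw [← hfeq] at htb htb1
    set t := f a with htdef
    have ht' : t < q.length := by omega
    rw [hgetD t ht'] at hta htb
    rw [hgetD (t+1) ht1] at hta1 htb1
    obtain ⟨ha1, haN, hava⟩ := hAsc a haA
    obtain ⟨hb1, hbN, havb⟩ := hAsc b hbA
    set qt : Fin w.length := q[t]'ht' with hqt
    set qt1 : Fin w.length := q[t+1]'ht1 with hqt1
    have hxy : w[qt] < w[qt1] := by
      simp only [hqt, hqt1]
      exact List.pairwise_iff_getElem.mp hqv t (t+1) ht' ht1 (by omega)
    set a1 : Fin w.length := ⟨a - 1, by omega⟩ with ha1d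
    set a' : Fin w.length := ⟨a, haN⟩ with had
    set b1 : Fin w.length := ⟨b - 1, by omega⟩ with hb1d
    set b' : Fin w.length := ⟨b, hbN⟩ with hbd
    have ha1v : (a1 : ℕ) = a - 1 := rfl
    have hav : (a' : ℕ) = a := rfl
    have hb1v : (b1 : ℕ) = b - 1 := rfl
    have hbv : (b' : ℕ) = b := rfl
    have hasc_a : w[a1] < w[a'] := hascv a ha1 (by omega) haN hava
    have hasc_b : w[b1] < w[b'] := hascv b hb1 (by omega) hbN havb
    set P : List (Fin w.length) := q.take (t+1) with hP
    set S : List (Fin w.length) := q.drop (t+1) with hS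
    have hPlen : P.length = t + 1 := by rw [hP, List.length_take]; omega
    have hSlen : S.length = q.length - (t+1) := by rw [hS, List.length_drop]
    have hPne : P ≠ [] := List.length_pos_iff.1 (by omega)
    have hSne : S ≠ [] := List.length_pos_iff.1 (by omega)
    have hPp : P.Pairwise (· < ·) :=
      List.Pairwise.sublist (by rw [hP]; exact List.take_sublist _ _) hqp
    have hPv : P.Pairwise (fun i j : Fin w.length => w[i] < w[j]) :=
      List.Pairwise.sublist (by rw [hP]; exact List.take_sublist _ _) hqv
    have hSp : S.Pairwise (· < ·) :=
      List.Pairwise.sublist (by rw [hS]; exact List.drop_sublist _ _) hqp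
    have hSv : S.Pairwise (fun i j : Fin w.length => w[i] < w[j]) :=
      List.Pairwise.sublist (by rw [hS]; exact List.drop_sublist _ _) hqv
    have hPrel : ∀ p ∈ P, p = qt ∨ p < qt := by
      intro p hp
      rw [hqt]
      exact take_rel' hqp ht' p (by rw [← hP]; exact hp)
    have hPrelv : ∀ p ∈ P, p = qt ∨ w[p] < w[qt] := by
      intro p hp
      simp only [hqt]
      exact take_rel' hqv ht' p (by rw [← hP]; exact hp)
    have hSrel : ∀ p ∈ S, p = qt1 ∨ qt1 < p := by
      intro p hp
      rw [hqt1]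
      exact drop_rel' hqp ht1 p (by rw [← hS]; exact hp)
    have hSrelv : ∀ p ∈ S, p = qt1 ∨ w[qt1] < w[p] := by
      intro p hp
      simp only [hqt1]
      exact drop_rel' hqv ht1 p (by rw [← hS]; exact hp)
    have hShead : S.head hSne = qt1 := by
      have he : S.head hSne = q[t+1]'ht1 := by
        simp only [hS, List.head_drop]
      rw [he, hqt1]
    have hPlast : P.getLast hPne = qt := by
      have he : P.getLast hPne = q[t]'ht' := by
        simp only [hP]
        rw [getLast_take' ht']
      rw [he, hqt]
    have hNE : ∀ p : Fin w.length, qt < p → p < qt1 → w[p] < w[qt] ∨ w[qt1] < w[p] := by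
      intro p hp1 hp2
      by_contra hcon
      push_neg at hcon
      obtain ⟨hx1, hx2⟩ := hcon
      have hxp : w[qt] < w[p] := hstrict _ _ hx1 (by
        intro h
        rw [h] at hp1
        exact lt_irrefl _ hp1)
      have hpy : w[p] < w[qt1] := hstrict _ _ hx2 (by
        intro h
        rw [h] at hp2
        exact lt_irrefl _ hp2)
      have h1 : (P ++ p :: S).Pairwise (· < ·) := by
        rw [List.pairwise_append]
        refine ⟨hPp, List.pairwise_cons.2 ⟨?_, hSp⟩, ?_⟩
        · intro x hx
          rcases hSrel x hx with rfl | h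
          · exact hp2
          · exact lt_trans hp2 h
        · intro r hr x hx
          have hr1 : r ≤ qt := by
            rcases hPrel r hr with rfl | h
            exacts [le_refl _, le_of_lt h]
          have hr2 : qt < x := by
            rw [List.mem_cons] at hx
            rcases hx with rfl | hx
            · exact hp1
            · rcases hSrel x hx with rfl | h
              · exact lt_trans hp1 hp2
              · exact lt_trans (lt_trans hp1 hp2) h
          exact lt_of_le_of_lt hr1 hr2
      have h2 : (P ++ p :: S).Pairwise (fun i j => w[i] < w[j]) := by
        rw [List.pairwise_append]
        refine ⟨hPv, List.pairwise_cons.2 ⟨?_, hSv⟩, ?_⟩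
        · intro x hx
          rcases hSrelv x hx with rfl | h
          · exact hpy
          · exact lt_trans hpy h
        · intro r hr x hx
          have hra : w[r] ≤ w[qt] := by
            rcases hPrelv r hr with rfl | h
            exacts [le_refl _, le_of_lt h]
          have hrb : w[qt] < w[x] := by
            rw [List.mem_cons] at hx
            rcases hx with rfl | hx
            · exact hxp
            · rcases hSrelv x hx with rfl | h
              · exact hxy
              · exact lt_trans hxy h
          exact lt_of_le_of_lt hra hrb
      have := length_le_lis h1 h2
      simp only [List.length_append, List.length_cons, hPlen, hSlen, hqlen] at this
      omega
    have hlow : ∀ p : Fin w.length, qt ≤ p → p < qt1 → w[p] < w[qt1] → w[p] ≤ w[qt] := by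
      intro p h1 h2 h3
      rcases eq_or_lt_of_le h1 with h | h
      · exact le_of_eq (by simp only [h])
      · rcases hNE p h h2 with h' | h'
        · exact le_of_lt h'
        · exact absurd h3 (not_lt.2 (le_of_lt h'))
    have buildA : ∀ c1 c : Fin w.length, qt < c1 → c1 < c → c < qt1 →
        w[qt1] < w[c1] → w[c1] < w[c] →
        ∃ s : List ℕ, s.Sublist w ∧ desNum s = 1 ∧ s.length = lis w + 2 := by
      intro c1 c hqc1 hc1c hcq hyc1 hc1c'
      obtain ⟨s, hs, hd, hl⟩ := build_witness (w := w) (I₁ := P ++ [c1, c]) (I₂ := S)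
        (by
          rw [List.pairwise_append]
          refine ⟨hPp, ?_, ?_⟩
          · refine List.pairwise_cons.2 ⟨?_, List.pairwise_singleton _ _⟩
            intro x hx
            rw [List.mem_singleton] at hx
            subst hx
            exact hc1c
          · intro p hp x hx
            have h1 : p ≤ qt := by
              rcases hPrel p hp with rfl | h
              exacts [le_refl _, le_of_lt h]
            have h2 : qt < x := by
              rw [List.mem_cons, List.mem_singleton] at hx
              rcases hx with rfl | rfl
              · exact hqc1
              · exact lt_trans hqc1 hc1c
            exact lt_of_le_of_lt h1 h2)
        hSp
        (by
          intro p hp x hx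
          rw [List.mem_append, List.mem_cons, List.mem_singleton] at hp
          have h1 : p ≤ c := by
            rcases hp with hp | hp | hp
            · rcases hPrel p hp with rfl | h
              · exact le_of_lt (lt_trans hqc1 hc1c)
              · exact le_of_lt (lt_trans h (lt_trans hqc1 hc1c))
            · subst hp
              exact le_of_lt hc1c
            · subst hp
              exact le_refl _
          have h2 : c < x := by
            rcases hSrel x hx with rfl | h
            · exact hcq
            · exact lt_trans hcq h
          exact lt_of_le_of_lt h1 h2)
        (by
          rw [List.pairwise_append]
          refine ⟨hPv, ?_, ?_⟩
          · refine List.pairwise_cons.2 ⟨?_, List.pairwise_singleton _ _⟩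
            intro x hx
            rw [List.mem_singleton] at hx
            subst hx
            exact hc1c'
          · intro p hp x hx
            have h1 : w[p] ≤ w[qt] := by
              rcases hPrelv p hp with rfl | h
              exacts [le_refl _, le_of_lt h]
            have h2 : w[qt] < w[x] := by
              have hq1 : w[qt] < w[c1] := lt_trans hxy hyc1
              rw [List.mem_cons, List.mem_singleton] at hx
              rcases hx with rfl | rfl
              · exact hq1
              · exact lt_trans hq1 hc1c'
            exact lt_of_le_of_lt h1 h2)
        hSv
        (by simp) hSne
        (by
          show w[S.head hSne] < w[(P ++ [c1, c]).getLast (by simp)]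
          have hgl : (P ++ [c1, c]).getLast (by simp) = c := by
            rw [List.getLast_append_of_ne_nil (by simp)]
            rfl
            simp
          simp only [hgl, hShead]
          exact lt_trans hyc1 hc1c')
      exact ⟨s, hs, hd, by
        simp only [List.length_append, List.length_cons, List.length_nil, hPlen, hSlen] at hl
        omega⟩
    have buildB : ∀ c1 c : Fin w.length, qt < c1 → c1 < c → c < qt1 →
        w[c1] < w[c] → w[c] < w[qt] →
        ∃ s : List ℕ, s.Sublist w ∧ desNum s = 1 ∧ s.length = lis w + 2 := by
      intro c1 c hqc1 hc1c hcq hvc1c hvcx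
      obtain ⟨s, hs, hd, hl⟩ := build_witness (w := w) (I₁ := P) (I₂ := c1 :: c :: S)
        hPp
        (by
          refine List.pairwise_cons.2 ⟨?_, List.pairwise_cons.2 ⟨?_, hSp⟩⟩
          · intro x hx
            rw [List.mem_cons] at hx
            rcases hx with rfl | hx
            · exact hc1c
            · rcases hSrel x hx with rfl | h
              · exact lt_trans hc1c hcq
              · exact lt_trans (lt_trans hc1c hcq) h
          · intro x hx
            rcases hSrel x hx with rfl | h
            · exact hcq
            · exact lt_trans hcq h)
        (by
          intro p hp x hx
          have h1 : p ≤ qt := by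
            rcases hPrel p hp with rfl | h
            exacts [le_refl _, le_of_lt h]
          have h2 : qt < x := by
            rw [List.mem_cons, List.mem_cons] at hx
            rcases hx with rfl | rfl | hx
            · exact hqc1
            · exact lt_trans hqc1 hc1c
            · rcases hSrel x hx with rfl | h
              · exact lt_trans hqc1 (lt_trans hc1c hcq)
              · exact lt_trans (lt_trans hqc1 (lt_trans hc1c hcq)) h
          exact lt_of_le_of_lt h1 h2)
        hPv
        (by
          refine List.pairwise_cons.2 ⟨?_, List.pairwise_cons.2 ⟨?_, hSv⟩⟩
          · intro x hx
            rw [List.mem_cons] at hx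
            have hc1y : w[c1] < w[qt1] := lt_trans (lt_trans hvc1c hvcx) hxy
            rcases hx with rfl | hx
            · exact hvc1c
            · rcases hSrelv x hx with rfl | h
              · exact hc1y
              · exact lt_trans hc1y h
          · intro x hx
            have hcy : w[c] < w[qt1] := lt_trans hvcx hxy
            rcases hSrelv x hx with rfl | h
            · exact hcy
            · exact lt_trans hcy h)
        hPne (by simp)
        (by
          show w[(c1 :: c :: S).head (by simp)] < w[P.getLast hPne]
          simp only [List.head_cons, hPlast]
          exact lt_trans hvc1c hvcx)
      exact ⟨s, hs, hd, by
        simp only [List.length_cons, hPlen, hSlen] at hl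
        omega⟩
    by_cases hA1 : w[qt1] < w[a1]
    · have h1 : qt < a1 := by
        rcases eq_or_lt_of_le (show (qt:ℕ) ≤ (a1:ℕ) by omega) with h | h
        · exfalso
          have he : qt = a1 := Fin.ext h
          have hveq : w[qt] = w[a1] := congrArg (fun p : Fin w.length => w[p]) he
          omega
        · exact Fin.lt_def.2 h
      have h3 : a' < qt1 := by
        rcases eq_or_lt_of_le (show (a':ℕ) ≤ (qt1:ℕ) by omega) with h | h
        · exfalso
          have he : a' = qt1 := Fin.ext h
          have hveq : w[a'] = w[qt1] := congrArg (fun p : Fin w.length => w[p]) he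
          omega
        · exact Fin.lt_def.2 h
      exact buildA a1 a' h1 (Fin.lt_def.2 (by omega)) h3 hA1 hasc_a
    push_neg at hA1
    have ha1y : w[a1] < w[qt1] := hstrict _ _ hA1 (by
      intro h
      have hveq : ((a1):ℕ) = ((qt1):ℕ) := by rw [h]
      omega)
    have ha1x : w[a1] ≤ w[qt] :=
      hlow a1 (Fin.le_def.2 (by omega)) (Fin.lt_def.2 (by omega)) ha1y
    by_cases hA2 : w[a'] < w[qt1]
    · have haq : a' < qt1 := by
        rcases eq_or_lt_of_le (show (a':ℕ) ≤ (qt1:ℕ) by omega) with h | h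
        · exfalso
          have he : a' = qt1 := Fin.ext h
          have hveq : w[a'] = w[qt1] := congrArg (fun p : Fin w.length => w[p]) he
          omega
        · exact Fin.lt_def.2 h
      have hax : w[a'] < w[qt] := by
        rcases hNE a' (Fin.lt_def.2 (by omega)) haq with h | h
        · exact h
        · exact absurd hA2 (not_lt.2 (le_of_lt h))
      have h1 : qt < a1 := by
        rcases eq_or_lt_of_le (show (qt:ℕ) ≤ (a1:ℕ) by omega) with h | h
        · exfalso
          have he : qt = a1 := Fin.ext h
          have hveq : w[qt] = w[a1] := congrArg (fun p : Fin w.length => w[p]) he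
          omega
        · exact Fin.lt_def.2 h
      exact buildB a1 a' h1 (Fin.lt_def.2 (by omega)) haq hasc_a hax
    push_neg at hA2
    by_cases hB1 : w[b'] < w[qt]
    · have hb'q : b' < qt1 := by
        rcases eq_or_lt_of_le (show (b':ℕ) ≤ (qt1:ℕ) by omega) with h | h
        · exfalso
          have he : b' = qt1 := Fin.ext h
          have hveq : w[b'] = w[qt1] := congrArg (fun p : Fin w.length => w[p]) he
          omega
        · exact Fin.lt_def.2 h
      have h1 : qt < b1 := by
        rcases eq_or_lt_of_le (show (qt:ℕ) ≤ (b1:ℕ) by omega) with h | h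
        · exfalso
          have he : qt = b1 := Fin.ext h
          have hveq : w[qt] = w[b1] := congrArg (fun p : Fin w.length => w[p]) he
          omega
        · exact Fin.lt_def.2 h
      exact buildB b1 b' h1 (Fin.lt_def.2 (by omega)) hb'q hasc_b hB1
    push_neg at hB1
    by_cases hC : w[qt1] < w[b1]
    · have h1 : qt < b1 := by
        rcases eq_or_lt_of_le (show (qt:ℕ) ≤ (b1:ℕ) by omega) with h | h
        · exfalso
          have he : qt = b1 := Fin.ext h
          have hveq : w[qt] = w[b1] := congrArg (fun p : Fin w.length => w[p]) he
          omega
        · exact Fin.lt_def.2 h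
      have h3 : b' < qt1 := by
        rcases eq_or_lt_of_le (show (b':ℕ) ≤ (qt1:ℕ) by omega) with h | h
        · exfalso
          have he : b' = qt1 := Fin.ext h
          have hveq : w[b'] = w[qt1] := congrArg (fun p : Fin w.length => w[p]) he
          omega
        · exact Fin.lt_def.2 h
      exact buildA b1 b' h1 (Fin.lt_def.2 (by omega)) h3 hC hasc_b
    push_neg at hC
    have hb1y : w[b1] < w[qt1] := hstrict _ _ hC (by
      intro h
      have hveq : ((b1):ℕ) = ((qt1):ℕ) := by rw [h]
      omega)
    have hb1x : w[b1] ≤ w[qt] :=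
      hlow b1 (Fin.le_def.2 (by omega)) (Fin.lt_def.2 (by omega)) hb1y
    have hab1 : a < b - 1 := by
      rcases eq_or_lt_of_le (show a ≤ b - 1 by omega) with h | h
      · exfalso
        have he : a' = b1 := Fin.ext (by omega)
        have hveq : w[a'] = w[b1] := congrArg (fun p : Fin w.length => w[p]) he
        omega
      · exact h
    have hya : w[qt1] < w[a'] := hstrict _ _ hA2 (by
      intro h
      have hveq : ((qt1):ℕ) = ((a'):ℕ) := by rw [h]
      omega)
    have hb1x' : w[b1] < w[qt] := hstrict _ _ hb1x (by
      intro h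
      have hveq : ((b1):ℕ) = ((qt):ℕ) := by rw [h]
      omega)
    obtain ⟨s, hs, hd, hl⟩ := build_witness (w := w) (I₁ := P ++ [a']) (I₂ := b1 :: S)
      (by
        rw [List.pairwise_append]
        refine ⟨hPp, List.pairwise_singleton _ _, ?_⟩
        intro p hp x hx
        rw [List.mem_singleton] at hx
        subst hx
        have h1 : p ≤ qt := by
          rcases hPrel p hp with rfl | h
          exacts [le_refl _, le_of_lt h]
        exact lt_of_le_of_lt h1 (Fin.lt_def.2 (by omega)))
      (by
        refine List.pairwise_cons.2 ⟨?_, hSp⟩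
        intro x hx
        rcases hSrel x hx with rfl | h
        · exact Fin.lt_def.2 (by omega)
        · exact lt_trans (Fin.lt_def.2 (show (b1:ℕ) < (qt1:ℕ) by omega)) h)
      (by
        intro p hp x hx
        rw [List.mem_append, List.mem_singleton] at hp
        have h1 : (p:ℕ) ≤ a := by
          rcases hp with hp | hp
          · rcases hPrel p hp with rfl | h
            · omega
            · have := Fin.lt_def.1 h
              omega
          · subst hp
            omega
        have h2 : a < (x:ℕ) := by
          rw [List.mem_cons] at hx
          rcases hx with rfl | hx
          · omega
          · rcases hSrel x hx with rfl | h
            · omega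
            · have := Fin.lt_def.1 h
              omega
        exact Fin.lt_def.2 (by omega))
      (by
        rw [List.pairwise_append]
        refine ⟨hPv, List.pairwise_singleton _ _, ?_⟩
        intro p hp x hx
        rw [List.mem_singleton] at hx
        subst hx
        have h1 : w[p] ≤ w[qt] := by
          rcases hPrelv p hp with rfl | h
          exacts [le_refl _, le_of_lt h]
        exact lt_of_le_of_lt h1 (lt_trans hxy hya))
      (by
        refine List.pairwise_cons.2 ⟨?_, hSv⟩
        intro x hx
        rcases hSrelv x hx with rfl | h
        · exact hb1y
        · exact lt_trans hb1y h)
      (by simp) (by simp)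
      (by
        show w[(b1 :: S).head (by simp)] < w[(P ++ [a']).getLast (by simp)]
        have hgl : (P ++ [a']).getLast (by simp) = a' := by
          rw [List.getLast_append_of_ne_nil (by simp)]
          rfl
          simp
        simp only [hgl, List.head_cons]
        exact lt_trans hb1x' (lt_trans hxy hya))
    exact ⟨s, hs, hd, by
      simp only [List.length_append, List.length_cons, hPlen, hSlen, List.length_nil] at hl
      omega⟩
  rcases lt_or_gt_of_ne hne₀ with h | h
  · exact key a₀ b₀ ha₀ hb₀ h hfeq₀
  · exact key b₀ a₀ hb₀ ha₀ h hfeq₀.symm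
end

section
/- Let π be a non-identity permutation of size n whose last descent is at position k, and let j = is(π_{[1,k]}) be the longest increasing subsequence length of the prefix π(1)⋯π(k). Then for every i with 1 ≤ i ≤ j, π has a subsequence of length at least i + n − k whose descent set is exactly {i}; that is, ls_{{i}}(π) ≥ i + n − k. -/
open List Finset

variable {α : Type*}

lemma sorted_getElem_lt [Preorder α] {l : List α} (h : l.Pairwise (· < ·)) {a b : ℕ}
    (hab : a < b) (hb : b < l.length) : l[a]'(lt_trans hab hb) < l[b] := by
  have := List.pairwise_iff_getElem.mp h a b (lt_trans hab hb) hb hab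
  simpa using this

lemma desSet_append_sorted [LinearOrder α] [Inhabited α] {l1 l2 : List α}
    (h1 : l1.Pairwise (· < ·)) (h2 : l2.Pairwise (· < ·))
    (hne1 : l1 ≠ []) (hne2 : l2 ≠ [])
    (hlt : l2.head hne2 < l1.getLast hne1) :
    desSet (l1 ++ l2) = {l1.length} := by
  have L1 : 1 ≤ l1.length := List.length_pos_iff.mpr hne1
  have L2 : 1 ≤ l2.length := List.length_pos_iff.mpr hne2
  ext p
  simp only [desSet, Finset.mem_filter, Finset.mem_Icc, Finset.mem_singleton,
    List.length_append]
  constructor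
  · rintro ⟨⟨hp1, hp2⟩, hdes⟩
    by_contra hne
    rw [List.getD_eq_getElem _ _ (by rw [List.length_append]; omega),
        List.getD_eq_getElem _ _ (by rw [List.length_append]; omega)] at hdes
    rcases Nat.lt_or_ge p l1.length with h | h
    · rw [List.getElem_append_left (by omega), List.getElem_append_left (by omega)] at hdes
      exact lt_asymm hdes (sorted_getElem_lt h1 (by omega : p - 1 < p) h)
    · have h' : l1.length < p := lt_of_le_of_ne h (fun e => hne e.symm)
      rw [List.getElem_append_right (by omega), List.getElem_append_right (by omega)] at hdes
      exact lt_asymm hdes (sorted_getElem_lt h2 (by omega : p - 1 - l1.length < p - l1.length)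
        (by omega))
  · rintro rfl
    refine ⟨⟨L1, by omega⟩, ?_⟩
    rw [List.getD_eq_getElem _ _ (by rw [List.length_append]; omega),
        List.getD_eq_getElem _ _ (by rw [List.length_append]; omega),
        List.getElem_append_left (by omega : l1.length - 1 < l1.length),
        List.getElem_append_right (le_refl _)]
    simpa [List.head_eq_getElem, List.getLast_eq_getElem] using hlt

theorem stmt11 (n : ℕ) (π : Equiv.Perm (Fin n)) (k : ℕ)
    (hk : k ∈ desSet (word π)) (hklast : ∀ k' ∈ desSet (word π), k' ≤ k)
    (i : ℕ) (hi1 : 1 ≤ i) (hij : i ≤ lis (factor (word π) 1 k)) :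
    (∃ s : List ℕ, s.Sublist (word π) ∧ desSet s = {i} ∧ i + n - k ≤ s.length) ∧
      i + n - k ≤ lsD (word π) {i} := by
  set w := word π with hw
  have hwlen : w.length = n := by simp [hw, word]
  rw [desSet, Finset.mem_filter, Finset.mem_Icc, hwlen] at hk
  obtain ⟨⟨hk1, hk2⟩, hkdes⟩ := hk
  have hn2 : 2 ≤ n := by omega
  have hkn : k < n := by omega
  have hget : ∀ q (hq : q < n), w.getD q default = (π ⟨q, hq⟩ : ℕ) := by
    intro q hq
    rw [List.getD_eq_getElem _ _ (by omega : q < w.length)]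
    simp [hw, word]
  have hinj : ∀ a b (ha : a < n) (hb : b < n),
      (π ⟨a, ha⟩ : ℕ) = (π ⟨b, hb⟩ : ℕ) → a = b := by
    intro a b ha hb h
    have h2 : π ⟨a, ha⟩ = π ⟨b, hb⟩ := Fin.val_injective h
    have := π.injective h2
    simpa [Fin.ext_iff] using this
  have hasc : ∀ q, k < q → q < n → w.getD (q - 1) default < w.getD q default := by
    intro q hq1 hq2
    have hnotdes : q ∉ desSet w := fun h => absurd (hklast q h) (by omega)
    rw [desSet, Finset.mem_filter, Finset.mem_Icc, hwlen] at hnotdes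
    push_neg at hnotdes
    have hle : w.getD (q - 1) default ≤ w.getD q default := hnotdes ⟨by omega, by omega⟩
    rcases lt_or_eq_of_le hle with h | h
    · exact h
    · exfalso
      rw [hget (q - 1) (by omega), hget q hq2] at h
      have := hinj _ _ (by omega) hq2 h
      omega
  -- the suffix
  set S := w.drop k with hSdef
  have hSlen : S.length = n - k := by simp [hSdef, hwlen]
  have hSne : S ≠ [] := by
    intro h; rw [h] at hSlen; simp at hSlen; omega
  have hgetS : ∀ p (h : p < S.length), S[p]'h = w.getD (k + p) default := by
    intro p h
    have h' : k + p < w.length := by rw [hwlen]; omega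
    rw [List.getD_eq_getElem w default h']
    exact List.getElem_drop
  have hS : S.Pairwise (· < ·) := by
    rw [← List.isChain_iff_pairwise, List.isChain_iff_getElem]
    intro p hp
    rw [hgetS p (by omega), hgetS (p + 1) (by omega)]
    have := hasc (k + p + 1) (by omega) (by omega)
    simpa [Nat.add_sub_cancel, show k + p + 1 - 1 = k + p by omega, Nat.add_assoc] using this
  have hShead : S.head hSne = w.getD k default := by
    rw [List.head_eq_getElem, hgetS 0 (by omega)]
    norm_num
  -- the prefix
  set P := w.take k with hPdef
  have hPlen : P.length = k := by simp [hPdef, hwlen]; omega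
  have hfac : factor w 1 k = P := by
    simp only [factor, hPdef, Nat.sub_self, List.drop_zero]
    congr 1
    omega
  -- extract an increasing subsequence of length i from P
  have hbdd : BddAbove {m | ∃ s : List ℕ, s.Sublist P ∧ s.Pairwise (· < ·) ∧ s.length = m} := by
    refine ⟨k, fun m hm => ?_⟩
    obtain ⟨s, hs, _, hl⟩ := hm
    rw [← hl, ← hPlen]
    exact hs.length_le
  have hne0 : ({m | ∃ s : List ℕ, s.Sublist P ∧ s.Pairwise (· < ·) ∧ s.length = m} : Set ℕ).Nonempty :=
    ⟨0, [], List.nil_sublist _, List.Pairwise.nil, rfl⟩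
  have hmem := Nat.sSup_mem hne0 hbdd
  obtain ⟨t0, ht0sub, ht0sorted, ht0len⟩ := hmem
  rw [hfac] at hij
  have hit0 : i ≤ t0.length := by
    rw [ht0len]; exact hij
  set t := t0.drop (t0.length - i) with htdef
  have htlen : t.length = i := by simp [htdef]; omega
  have htsorted : t.Pairwise (· < ·) := List.Pairwise.sublist (List.drop_sublist _ _) ht0sorted
  have htsub : t <+ P := (List.drop_sublist _ _).trans ht0sub
  have htne : t ≠ [] := by
    intro h; rw [h] at htlen; simp at htlen; omega
  -- build t' : increasing, length i, sublist of P, last element > w[k]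
  obtain ⟨t', ht'sub, ht'sorted, ht'len, ht'ne, ht'last⟩ :
      ∃ t' : List ℕ, t' <+ P ∧ t'.Pairwise (· < ·) ∧ t'.length = i ∧
        ∃ h : t' ≠ [], w.getD k default < t'.getLast h := by
    by_cases hcase : w.getD k default < t.getLast htne
    · exact ⟨t, htsub, htsorted, htlen, htne, hcase⟩
    · -- replace the last element with w[k-1]
      have hyk : t.getLast htne ≤ w.getD k default := not_lt.mp hcase
      have hdl : ∀ a ∈ t.dropLast, a < t.getLast htne := by
        have h2 : List.Pairwise (· < ·) (t.dropLast ++ [t.getLast htne]) := by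
          rw [List.dropLast_append_getLast htne]; exact htsorted
        rw [List.pairwise_append] at h2
        exact fun a ha => h2.2.2 a ha _ (List.mem_singleton_self _)
      have hklt : w.getD k default < w.getD (k - 1) default := hkdes
      have hdl' : ∀ a ∈ t.dropLast, a < w.getD (k - 1) default :=
        fun a ha => lt_of_lt_of_le (hdl a ha) (le_trans hyk hklt.le)
      have e : k = (k - 1) + 1 := by omega
      have hkl : k - 1 < w.length := by rw [hwlen]; omega
      have hPsplit : P = w.take (k - 1) ++ [w.getD (k - 1) default] := by
        rw [List.getD_eq_getElem w default hkl]
        show w.take k = _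
        conv_lhs => rw [e]
        rw [List.take_succ, List.getElem?_eq_getElem hkl]
        rfl
      have hsub' : t.dropLast <+ w.take (k - 1) := by
        have h := (List.dropLast_sublist t).trans htsub
        rw [hPsplit, List.sublist_append_iff] at h
        obtain ⟨l1, l2, heq, hl1, hl2⟩ := h
        have hl2' : l2 = [] := by
          rcases List.sublist_singleton.mp hl2 with h | h
          · exact h
          · exfalso
            have : w.getD (k - 1) default ∈ t.dropLast := by
              rw [heq, h]; exact List.mem_append_right _ (List.mem_singleton_self _)
            exact lt_irrefl _ (hdl' _ this)
        rw [hl2'] at heq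
        simp at heq
        rw [heq]; exact hl1
      refine ⟨t.dropLast ++ [w.getD (k - 1) default], ?_, ?_, ?_, by simp, ?_⟩
      · rw [hPsplit]
        exact hsub'.append (List.Sublist.refl _)
      · rw [List.pairwise_append]
        exact ⟨htsorted.sublist (List.dropLast_sublist t), List.pairwise_singleton _ _,
          fun a ha b hb => by rw [List.mem_singleton] at hb; rw [hb]; exact hdl' a ha⟩
      · rw [List.length_append, List.length_dropLast, htlen]
        simp; omega
      · rw [List.getLast_append_singleton]
        exact hkdes
  -- assemble
  set s := t' ++ S with hsdef
  have hssub : s <+ w := by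
    have h := ht'sub.append (List.Sublist.refl S)
    rwa [hPdef, hSdef, List.take_append_drop] at h
  have hsdes : desSet s = {i} := by
    rw [hsdef, desSet_append_sorted ht'sorted hS ht'ne hSne (by rw [hShead]; exact ht'last),
      ht'len]
  have hslen : s.length = i + (n - k) := by
    rw [hsdef, List.length_append, ht'len, hSlen]
  constructor
  · exact ⟨s, hssub, hsdes, by omega⟩
  · have hbdd2 : BddAbove {m | ∃ s : List ℕ, s.Sublist w ∧ desSet s = {i} ∧ s.length = m} := by
      refine ⟨n, fun m hm => ?_⟩
      obtain ⟨u, hu, _, hl⟩ := hm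
      rw [← hl, ← hwlen]
      exact hu.length_le
    have h := le_csSup hbdd2 ⟨s, hssub, hsdes, rfl⟩
    calc i + n - k ≤ s.length := by omega
    _ ≤ lsD w {i} := h
end

section
/- Let π be a non-identity permutation of size n with last descent at position k and j = is(π_{[1,k]}). Then for every i > j, π has no subsequence whose descent set is exactly {i}; that is, ls_{{i}}(π) = 0. -/
open List Finset

variable {α : Type*}

set_option maxHeartbeats 1000000 in
theorem stmt12 (n : ℕ) (π : Equiv.Perm (Fin n)) (k : ℕ)
    (hk : k ∈ desSet (word π)) (hklast : ∀ k' ∈ desSet (word π), k' ≤ k)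
    (i : ℕ) (hi : lis (factor (word π) 1 k) < i) :
    lsD (word π) {i} = 0 := by
  have hnodup : (word π).Nodup := by
    rw [word, List.nodup_ofFn]
    exact fun a b hab => π.injective (Fin.val_injective hab)
  revert hk hklast hi hnodup
  generalize word π = w
  intro hk hklast hi hnodup
  -- k bounds
  have hk' := hk
  rw [desSet, Finset.mem_filter, Finset.mem_Icc] at hk'
  have hk1 : 1 ≤ k := hk'.1.1
  -- w is strictly increasing on indices ≥ k (0-based)
  have step : ∀ t, k ≤ t → t + 1 < w.length → w.getD t default < w.getD (t + 1) default := by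
    intro t ht htl
    have hnot : t + 1 ∉ desSet w := fun h => by
      have := hklast _ h; omega
    rw [desSet, Finset.mem_filter, Finset.mem_Icc] at hnot
    push_neg at hnot
    have h1 := hnot ⟨by omega, by omega⟩
    simp only [Nat.add_sub_cancel] at h1
    have ht' : t < w.length := by omega
    rw [List.getD_eq_getElem w default ht', List.getD_eq_getElem w default htl] at h1 ⊢
    have hne : w[t] ≠ w[t + 1] := fun h => by
      have := (hnodup.getElem_inj_iff).1 h; omega
    omega
  have mono : ∀ p q, k ≤ p → p < q → q < w.length → w.getD p default < w.getD q default := by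
    intro p q hp hpq hq
    induction q with
    | zero => omega
    | succ q ih =>
      rcases Nat.lt_or_ge p q with h | h
      · exact lt_trans (ih h (by omega)) (step q (by omega) hq)
      · have : p = q := by omega
        subst this
        exact step p hp hq
  -- the set defining lsD is empty
  have hempty : {m | ∃ s : List ℕ, s.Sublist w ∧ desSet s = {i} ∧ s.length = m} = ∅ := by
    rw [Set.eq_empty_iff_forall_notMem]
    rintro m ⟨s, hsub, hdes, hlen⟩
    have hi_mem : i ∈ desSet s := by rw [hdes]; exact Finset.mem_singleton_self i
    rw [desSet, Finset.mem_filter, Finset.mem_Icc] at hi_mem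
    have hi1 : 1 ≤ i := hi_mem.1.1
    have hil : i + 1 ≤ s.length := by
      have := hi_mem.1.2
      have : 1 ≤ s.length - 1 := le_trans hi1 this
      omega
    have hsnodup : s.Nodup := hsub.nodup hnodup
    -- index embedding
    obtain ⟨f, hf⟩ := List.sublist_iff_exists_orderEmbedding_getElem?_eq.1 hsub
    have hgetD : ∀ a, s.getD a default = w.getD (f a) default := by
      intro a
      rw [List.getD_eq_getElem?_getD, List.getD_eq_getElem?_getD, hf]
    have hflen : ∀ a, a < s.length → f a < w.length := by
      intro a ha
      have h1 := hf a
      rw [List.getElem?_eq_getElem ha] at h1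
      exact (List.getElem?_eq_some_iff.1 h1.symm).1
    have hpq : f (i - 1) < f i := f.strictMono (by omega)
    have hq : f i < w.length := hflen i (by omega)
    have hinv : w.getD (f i) default < w.getD (f (i - 1)) default := by
      rw [← hgetD, ← hgetD]
      exact hi_mem.2
    have hpk : f (i - 1) < k := by
      by_contra h
      push_neg at h
      exact absurd (mono _ _ h hpq hq) (by omega)
    have hfk : ∀ a, a < i → f a < k := fun a ha =>
      lt_of_le_of_lt (f.monotone (by omega : a ≤ i - 1)) hpk
    -- the increasing prefix
    set t := s.take i with htdef
    have htlen : t.length = i := by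
      rw [htdef, List.length_take]; omega
    have hsorted : t.Pairwise (· < ·) := by
      rw [← List.isChain_iff_pairwise, List.isChain_iff_getElem]
      intro a ha
      rw [htlen] at ha
      simp only [List.get_eq_getElem, htdef, List.getElem_take]
      -- s[a] < s[a+1] since a+1 is not a descent of s
      have hnot : a + 1 ∉ desSet s := by
        rw [hdes, Finset.mem_singleton]; omega
      rw [desSet, Finset.mem_filter, Finset.mem_Icc] at hnot
      push_neg at hnot
      have h1 := hnot ⟨by omega, by omega⟩
      simp only [Nat.add_sub_cancel] at h1
      have ha1 : a + 1 < s.length := by omega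
      rw [List.getD_eq_getElem s default ha1,
        List.getD_eq_getElem s default (by omega : a < s.length)] at h1
      have hne : s[a] ≠ s[a + 1] := fun h => by
        have := (hsnodup.getElem_inj_iff).1 h; omega
      omega
    -- t is a sublist of w.take k
    have htsub : t.Sublist (w.take k) := by
      rw [List.sublist_iff_exists_orderEmbedding_getElem?_eq]
      refine ⟨OrderEmbedding.ofStrictMono
        (fun a => if a < i then f a else f a + w.length) ?_, ?_⟩
      · intro a b hab
        dsimp only
        have hfab := f.strictMono hab
        split_ifs <;> omega
      · intro a
        show t[a]? = (w.take k)[if a < i then f a else f a + w.length]?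
        rcases Nat.lt_or_ge a i with ha | ha
        · rw [if_pos ha]
          have h1 : t[a]? = s[a]? := by
            rw [htdef]
            exact List.getElem?_take_of_lt (by omega)
          have h2 : (w.take k)[f a]? = w[f a]? :=
            List.getElem?_take_of_lt (hfk a ha)
          rw [h1, h2, hf]
        · rw [if_neg (by omega)]
          have h1 : t[a]? = none := List.getElem?_eq_none (by omega)
          have h2 : (w.take k)[f a + w.length]? = none := by
            apply List.getElem?_eq_none
            rw [List.length_take]
            omega
          rw [h1, h2]
    -- conclude i ≤ lis (factor w 1 k)
    have hfac : factor w 1 k = w.take k := by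
      rw [factor]
      simp only [Nat.sub_self, List.drop_zero]
      congr 1
      omega
    have hle : i ≤ lis (factor w 1 k) := by
      rw [lis]
      apply le_csSup
      · refine ⟨(factor w 1 k).length, ?_⟩
        rintro m ⟨u, hu, -, hul⟩
        rw [← hul]
        exact hu.length_le
      · exact ⟨t, by rw [hfac]; exact htsub, hsorted, htlen⟩
    omega
  rw [lsD, hempty]
  exact csSup_empty
end

section
/- Let π ∈ S_n and i ≥ 1 with ls_{{i}}(π) ≠ 0. Let k be the smallest element of Des(π) such that is(π_{[1,k]}) ≥ i. Then ls_{{i}}(π) = i + is(π_{[k+1,n]}). -/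
open List Finset

variable {α : Type*}

lemma nat_default_eq : (default : ℕ) = 0 := rfl

lemma mem_desSet_iff {l : List ℕ} {j : ℕ} :
    j ∈ desSet l ↔ 1 ≤ j ∧ j ≤ l.length - 1 ∧ l.getD j 0 < l.getD (j - 1) 0 := by
  simp [desSet, Finset.mem_filter, Finset.mem_Icc, and_assoc, nat_default_eq]

lemma sorted_lt_iff_getD {l : List ℕ} :
    l.Pairwise (· < ·) ↔ ∀ j, 1 ≤ j → j < l.length → l.getD (j - 1) 0 < l.getD j 0 := by
  rw [← List.isChain_iff_pairwise, List.isChain_iff_getElem]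
  constructor
  · intro h j h1 h2
    have h3 : j - 1 + 1 < l.length := by omega
    have := h (j - 1) h3
    rw [List.getD_eq_getElem _ _ (show j - 1 < l.length by omega),
        List.getD_eq_getElem _ _ h2]
    simpa [List.get_eq_getElem, Nat.sub_add_cancel h1] using this
  · intro h j hj
    have := h (j + 1) (by omega) (by omega)
    rw [Nat.add_sub_cancel, List.getD_eq_getElem _ _ (show j < l.length by omega),
      List.getD_eq_getElem _ _ (show j + 1 < l.length by omega)] at this
    simpa [List.get_eq_getElem] using this

lemma getD_take_eq {l : List ℕ} {m k : ℕ} (h1 : m < k) (h2 : m < l.length) :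
    (l.take k).getD m 0 = l.getD m 0 := by
  rw [List.getD_eq_getElem _ _ (by rw [List.length_take]; omega),
      List.getD_eq_getElem _ _ h2, List.getElem_take]

lemma getD_drop_eq {l : List ℕ} {m k : ℕ} (h : k + m < l.length) :
    (l.drop k).getD m 0 = l.getD (k + m) 0 := by
  rw [List.getD_eq_getElem _ _ (by rw [List.length_drop]; omega),
      List.getD_eq_getElem _ _ h, List.getElem_drop]

lemma getD_junction (l₁ l₂ : List ℕ) (x : ℕ) :
    (l₁ ++ x :: l₂).getD l₁.length 0 = x := by
  rw [List.getD_append_right _ _ _ _ le_rfl]; simp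

lemma take_junction (l₁ l₂ : List ℕ) (x : ℕ) :
    (l₁ ++ x :: l₂).take (l₁.length + 1) = l₁ ++ [x] := by
  rw [List.take_append, List.take_of_length_le (by omega)]
  simp

lemma take_sublist_take (l : List ℕ) {m m' : ℕ} (h : m ≤ m') : l.take m <+ l.take m' := by
  have h1 := List.take_prefix m (l.take m')
  rw [List.take_take, min_eq_left h] at h1
  exact h1.sublist

lemma cons_sublist_decomp {a : ℕ} {t l : List ℕ} (h : a :: t <+ l) :
    ∃ l₁ l₂, l = l₁ ++ a :: l₂ ∧ t <+ l₂ := by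
  induction l with
  | nil => simp at h
  | cons b l ih =>
    cases h with
    | cons _ h' =>
      obtain ⟨l₁, l₂, heq, ht⟩ := ih h'
      exact ⟨b :: l₁, l₂, by rw [heq]; rfl, ht⟩
    | cons_cons _ h' => exact ⟨[], l, rfl, h'⟩

lemma last_sublist_decomp {t : List ℕ} {x : ℕ} {l : List ℕ} (h : t ++ [x] <+ l) :
    ∃ l₁ l₂, l = l₁ ++ x :: l₂ ∧ t <+ l₁ := by
  have h2 : x :: t.reverse <+ l.reverse := by simpa using h.reverse
  obtain ⟨m₁, m₂, hm, ht⟩ := cons_sublist_decomp h2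
  refine ⟨m₂.reverse, m₁.reverse, ?_, ?_⟩
  · have := congrArg List.reverse hm
    simpa [List.reverse_append] using this
  · simpa using ht.reverse

lemma sublist_cons_neq {x y : ℕ} {t l : List ℕ} (h : x :: t <+ y :: l) (hne : x ≠ y) :
    x :: t <+ l := by
  cases h with
  | cons _ h' => exact h'
  | cons_cons _ h' => exact absurd rfl hne

lemma exists_descent {w : List ℕ} {q p : ℕ} (hp : p < w.length) (hqp : q ≤ p)
    (hlt : w.getD p 0 < w.getD q 0) :
    ∃ d, q ≤ d ∧ d < p ∧ w.getD (d + 1) 0 < w.getD d 0 := by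
  by_contra hcon
  push_neg at hcon
  have key : ∀ m, q + m ≤ p → w.getD q 0 ≤ w.getD (q + m) 0 := by
    intro m
    induction m with
    | zero => simp
    | succ m ih =>
      intro hm
      have h1 : w.getD q 0 ≤ w.getD (q + m) 0 := ih (by omega)
      have h2 := hcon (q + m) (by omega) (by omega)
      rw [show q + (m + 1) = q + m + 1 by omega]
      omega
  have := key (p - q) (by omega)
  rw [show q + (p - q) = p by omega] at this
  omega

lemma le_lis {w s : List ℕ} (hs : s <+ w) (hsort : s.Pairwise (· < ·)) : s.length ≤ lis w :=
  le_csSup ⟨w.length, by rintro m ⟨t, ht, -, rfl⟩; exact ht.length_le⟩ ⟨s, hs, hsort, rfl⟩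

lemma lis_spec (w : List ℕ) : ∃ s, s <+ w ∧ s.Pairwise (· < ·) ∧ s.length = lis w := by
  have h := Nat.sSup_mem (s := {m | ∃ s : List ℕ, s.Sublist w ∧ s.Pairwise (· < ·) ∧ s.length = m})
    ⟨0, [], List.nil_sublist _, List.Pairwise.nil, rfl⟩
    ⟨w.length, by rintro m ⟨t, ht, -, rfl⟩; exact ht.length_le⟩
  exact h

lemma desSet_append_single {u v : List ℕ} (hu : u.Pairwise (· < ·)) (hv : v.Pairwise (· < ·))
    (hune : u ≠ []) (hvne : v ≠ [])
    (hlt : v.getD 0 0 < u.getD (u.length - 1) 0) :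
    desSet (u ++ v) = {u.length} := by
  have hu1 : 1 ≤ u.length := List.length_pos_iff.mpr hune
  have hv1 : 1 ≤ v.length := List.length_pos_iff.mpr hvne
  ext j
  rw [mem_desSet_iff, Finset.mem_singleton, List.length_append]
  constructor
  · rintro ⟨h1, h2, h3⟩
    by_contra hne
    rcases lt_or_gt_of_ne hne with hlt' | hgt
    · rw [List.getD_append _ _ _ _ (by omega), List.getD_append _ _ _ _ (by omega)] at h3
      have := sorted_lt_iff_getD.mp hu j h1 (by omega)
      omega
    · rw [List.getD_append_right _ _ _ _ (by omega), List.getD_append_right _ _ _ _ (by omega)] at h3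
      have := sorted_lt_iff_getD.mp hv (j - u.length) (by omega) (by omega)
      rw [show j - u.length - 1 = j - 1 - u.length by omega] at this
      omega
  · rintro rfl
    refine ⟨hu1, by omega, ?_⟩
    rw [List.getD_append_right _ _ _ _ le_rfl, Nat.sub_self,
        List.getD_append _ _ _ _ (by omega)]
    exact hlt

lemma desSet_single_decomp {s : List ℕ} (hnd : s.Nodup) {i : ℕ} (hd : desSet s = {i}) :
    1 ≤ i ∧ i < s.length ∧ (s.take i).Pairwise (· < ·) ∧ (s.drop i).Pairwise (· < ·) ∧
      (s.drop i).getD 0 0 < (s.take i).getD ((s.take i).length - 1) 0 := by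
  have hmem : i ∈ desSet s := by rw [hd]; exact Finset.mem_singleton_self i
  rw [mem_desSet_iff] at hmem
  obtain ⟨h1, h2, h3⟩ := hmem
  have hilen : i < s.length := by omega
  have hasc : ∀ j, 1 ≤ j → j < s.length → j ≠ i → s.getD (j - 1) 0 < s.getD j 0 := by
    intro j hj1 hj2 hji
    have hnot : j ∉ desSet s := by rw [hd]; simpa using hji
    rw [mem_desSet_iff] at hnot
    push_neg at hnot
    have hle : s.getD (j - 1) 0 ≤ s.getD j 0 := by
      have := hnot hj1 (by omega)
      omega
    rcases lt_or_eq_of_le hle with h | h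
    · exact h
    · exfalso
      rw [List.getD_eq_getElem _ _ (show j - 1 < s.length by omega),
          List.getD_eq_getElem _ _ hj2] at h
      have := (List.Nodup.getElem_inj_iff hnd).mp h
      omega
  have htlen : (s.take i).length = i := by rw [List.length_take]; omega
  refine ⟨h1, hilen, ?_, ?_, ?_⟩
  · rw [sorted_lt_iff_getD]
    intro j hj1 hj2
    rw [htlen] at hj2
    rw [getD_take_eq (by omega) (by omega), getD_take_eq (by omega) (by omega)]
    exact hasc j hj1 (by omega) (by omega)
  · rw [sorted_lt_iff_getD]
    intro j hj1 hj2
    rw [List.length_drop] at hj2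
    rw [getD_drop_eq (by omega), getD_drop_eq (by omega)]
    rw [show i + (j - 1) = i + j - 1 by omega]
    exact hasc (i + j) (by omega) (by omega) (by omega)
  · rw [htlen, getD_drop_eq (by omega), getD_take_eq (by omega) (by omega)]
    simpa using h3

theorem stmt13 (n : ℕ) (π : Equiv.Perm (Fin n)) (i : ℕ) (hi : 1 ≤ i)
    (h0 : lsD (word π) {i} ≠ 0) (k : ℕ)
    (hk : k ∈ desSet (word π)) (hki : i ≤ lis (factor (word π) 1 k))
    (hkmin : ∀ k' ∈ desSet (word π), i ≤ lis (factor (word π) 1 k') → k ≤ k') :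
    lsD (word π) {i} = i + lis (factor (word π) (k + 1) n) := by
  classical
  set w := word π with hw
  have hwlen : w.length = n := by simp [hw, word]
  have hwnd : w.Nodup := by
    rw [hw, word, List.nodup_ofFn]
    exact Fin.val_injective.comp π.injective
  rw [mem_desSet_iff] at hk
  obtain ⟨hk1, hk2, hk3⟩ := hk
  rw [hwlen] at hk2
  have hn2 : 2 ≤ n := by omega
  have hkn : k < n := by omega
  have hfac1 : ∀ m, 1 ≤ m → factor w 1 m = w.take m := by
    intro m hm
    show (w.drop (1 - 1)).take (m - 1 + 1) = w.take m
    rw [show (1:ℕ) - 1 = 0 from rfl, List.drop_zero, show m - 1 + 1 = m by omega]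
  have hfac2 : factor w (k + 1) n = w.drop k := by
    show (w.drop (k + 1 - 1)).take (n - (k + 1) + 1) = w.drop k
    rw [Nat.add_sub_cancel, show n - (k + 1) + 1 = n - k by omega]
    apply List.take_of_length_le
    rw [List.length_drop, hwlen]
  rw [hfac1 k hk1] at hki
  rw [hfac2]
  set A := w.take k with hA
  set B := w.drop k with hB
  set L := lis B with hL
  have hAlen : A.length = k := by rw [hA, List.length_take]; omega
  have hBlen : B.length = n - k := by rw [hB, List.length_drop]; omega
  -- minimality helper
  have hmin' : ∀ q d : ℕ, q ≤ d → d + 1 < k → w.getD (d + 1) 0 < w.getD d 0 →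
      ∀ u' : List ℕ, u'.Pairwise (· < ·) → i ≤ u'.length → u' <+ w.take (q + 1) → False := by
    intro q d hqd hdk hdes u' hs hl hsub
    have hmem : d + 1 ∈ desSet w :=
      mem_desSet_iff.mpr ⟨by omega, by rw [hwlen]; omega, by simpa using hdes⟩
    have hle : i ≤ lis (factor w 1 (d + 1)) := by
      rw [hfac1 _ (by omega)]
      exact hl.trans (le_lis (hsub.trans (take_sublist_take w (by omega))) hs)
    have := hkmin _ hmem hle
    omega
  -- construct u
  obtain ⟨u0, hu0sub, hu0sort, hu0len⟩ := lis_spec A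
  have hiu0 : i ≤ u0.length := by rw [hu0len]; exact hki
  set u1 := u0.drop (u0.length - i) with hu1
  have hu1sub : u1 <+ A := (List.drop_sublist _ _).trans hu0sub
  have hu1sort : u1.Pairwise (· < ·) := List.Pairwise.sublist (List.drop_sublist _ _) hu0sort
  have hu1len : u1.length = i := by rw [hu1, List.length_drop]; omega
  have hu1ne : u1 ≠ [] := by
    intro h; rw [h] at hu1len; simp at hu1len; omega
  obtain ⟨A₁, A₂, hAeq, hA₁⟩ := last_sublist_decomp (l := A)
    (by rw [List.dropLast_append_getLast hu1ne]; exact hu1sub)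
  set x := u1.getLast hu1ne with hx
  set q := A₁.length with hq
  have hqk : q < k := by
    have := congrArg List.length hAeq
    rw [hAlen, List.length_append, List.length_cons] at this
    omega
  have hwq : w.getD q 0 = x := by
    have h1 : A.getD q 0 = x := by rw [hAeq]; exact getD_junction _ _ _
    rw [← getD_take_eq hqk (by omega : q < w.length)]
    exact h1
  have hu1sub' : u1 <+ w.take (q + 1) := by
    have h1 : u1 <+ A₁ ++ [x] := by
      conv_lhs => rw [← List.dropLast_append_getLast hu1ne]
      exact hA₁.append (List.Sublist.refl _)
    have h2 : A₁ ++ [x] = A.take (q + 1) := by rw [hAeq, take_junction]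
    have h3 : A.take (q + 1) = w.take (q + 1) := by
      rw [hA, List.take_take, min_eq_left (by omega)]
    rwa [h2, h3] at h1
  have hxa : x ≤ w.getD (k - 1) 0 := by
    by_contra hcon
    push_neg at hcon
    rw [← hwq] at hcon
    obtain ⟨d, hd1, hd2, hd3⟩ :=
      exists_descent (show k - 1 < w.length by omega) (show q ≤ k - 1 by omega) hcon
    exact hmin' q d hd1 (by omega) hd3 u1 hu1sort (by omega) hu1sub'
  have hu1last : u1.getD (i - 1) 0 = x := by
    rw [hx, List.getLast_eq_getElem, List.getD_eq_getElem _ _ (by omega : i - 1 < u1.length)]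
    congr 1
    omega
  obtain ⟨u, husort, husub, hulen, hulast⟩ :
      ∃ u : List ℕ, u.Pairwise (· < ·) ∧ u <+ A ∧ u.length = i ∧
        u.getD (i - 1) 0 = w.getD (k - 1) 0 := by
    rcases eq_or_lt_of_le hxa with hxeq | hxlt
    · exact ⟨u1, hu1sort, hu1sub, hu1len, by rw [hu1last, hxeq]⟩
    · have hlenA₂ : A₂.length = k - q - 1 := by
        have := congrArg List.length hAeq
        rw [hAlen, List.length_append, List.length_cons] at this
        omega
      have hA₂ne : A₂ ≠ [] := by
        intro h
        have hq2 : q = k - 1 := by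
          rw [h] at hlenA₂
          simp at hlenA₂
          omega
        rw [hq2] at hwq
        omega
      have hA₂len1 : 1 ≤ A₂.length := List.length_pos_iff.mpr hA₂ne
      have hAk1 : A.getD (k - 1) 0 = w.getD (k - 1) 0 := getD_take_eq (by omega) (by omega)
      have hmem2 : w.getD (k - 1) 0 ∈ A₂ := by
        have hstep : A.getD (k - 1) 0 = A₂.getD (k - 1 - q - 1) 0 := by
          rw [hAeq, List.getD_append_right _ _ _ _ (show A₁.length ≤ k - 1 by omega),
            show k - 1 - A₁.length = (k - 1 - q - 1) + 1 by omega, List.getD_cons_succ]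
          congr 1
        rw [hAk1] at hstep
        rw [hstep, List.getD_eq_getElem _ _ (by omega : k - 1 - q - 1 < A₂.length)]
        exact List.getElem_mem _
      have hall : ∀ y ∈ u1.dropLast, y < x := by
        intro y hy
        have := hu1sort
        conv at this => rw [← List.dropLast_append_getLast hu1ne]
        rw [List.pairwise_append] at this
        exact this.2.2 y hy x (by simp [hx])
      refine ⟨u1.dropLast ++ [w.getD (k - 1) 0], ?_, ?_, ?_, ?_⟩
      · rw [List.pairwise_append]
        refine ⟨List.Pairwise.sublist (List.dropLast_sublist u1) hu1sort,
          List.pairwise_singleton _ _, ?_⟩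
        intro y hy z hz
        rw [List.mem_singleton] at hz
        subst hz
        exact lt_trans (hall y hy) hxlt
      · rw [hAeq]
        refine hA₁.append ?_
        exact (List.singleton_sublist.mpr hmem2).trans (List.sublist_cons_self x A₂)
      · rw [List.length_append, List.length_dropLast, hu1len]
        simp
        omega
      · rw [List.getD_append_right _ _ _ _ (by rw [List.length_dropLast, hu1len])]
        rw [List.length_dropLast, hu1len, Nat.sub_self]
        rfl
  -- construct v
  obtain ⟨v0, hv0sub, hv0sort, hv0len⟩ := lis_spec B
  have hBne : B ≠ [] := by
    intro h; rw [h] at hBlen; simp at hBlen; omega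
  have hBhead : B.getD 0 0 = w.getD k 0 := by
    rw [hB, getD_drop_eq (by omega), Nat.add_zero]
  have hL1 : 1 ≤ L := by
    have hm : B.getD 0 0 ∈ B := by
      rw [List.getD_eq_getElem _ _ (by omega : 0 < B.length)]
      exact List.getElem_mem _
    have := le_lis (List.singleton_sublist.mpr hm) (List.pairwise_singleton _ _)
    simpa using this
  have hv0ne : v0 ≠ [] := by
    intro h; rw [h] at hv0len; simp at hv0len; omega
  obtain ⟨v, hvsort, hvsub, hvlen, hvne, hvhead⟩ :
      ∃ v : List ℕ, v.Pairwise (· < ·) ∧ v <+ B ∧ v.length = L ∧ v ≠ [] ∧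
        v.getD 0 0 < w.getD (k - 1) 0 := by
    by_cases hcase : v0.getD 0 0 < w.getD (k - 1) 0
    · exact ⟨v0, hv0sort, hv0sub, hv0len, hv0ne, hcase⟩
    · push_neg at hcase
      obtain ⟨h0', t, hv0eq⟩ : ∃ h0' t, v0 = h0' :: t :=
        ⟨v0.head hv0ne, v0.tail, (List.cons_head_tail hv0ne).symm⟩
      have hh0 : v0.getD 0 0 = h0' := by rw [hv0eq]; rfl
      have hbb : w.getD k 0 < h0' := by omega
      have hBeq : B = w.getD k 0 :: B.tail := by
        conv_lhs => rw [← List.cons_head_tail hBne]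
        congr 1
        rw [← hBhead, List.getD_eq_getElem _ _ (by omega : 0 < B.length)]
        exact List.head_eq_getElem hBne
      have hsub2 : h0' :: t <+ B.tail := by
        rw [hv0eq] at hv0sub
        rw [hBeq] at hv0sub
        exact sublist_cons_neq hv0sub (by omega)
      refine ⟨w.getD k 0 :: t, ?_, ?_, ?_, by simp, ?_⟩
      · rw [hv0eq, List.pairwise_cons] at hv0sort
        exact List.pairwise_cons.mpr ⟨fun y hy => by have := hv0sort.1 y hy; omega, hv0sort.2⟩
      · rw [hBeq]
        exact (List.sublist_of_cons_sublist hsub2).cons_cons _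
      · rw [List.length_cons]
        rw [hv0eq, List.length_cons] at hv0len
        omega
      · show w.getD k 0 < w.getD (k - 1) 0
        exact hk3
  have hune : u ≠ [] := by
    intro h; rw [h] at hulen; simp at hulen; omega
  have hdess : desSet (u ++ v) = {i} := by
    have h := desSet_append_single husort hvsort hune hvne
      (by rw [hulen, hulast]; exact hvhead)
    rwa [hulen] at h
  have hssub : u ++ v <+ w := by
    have h := husub.append hvsub
    rwa [hA, hB, List.take_append_drop] at h
  have hSbdd : BddAbove {m | ∃ s : List ℕ, s.Sublist w ∧ desSet s = {i} ∧ s.length = m} :=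
    ⟨w.length, by rintro m ⟨t, ht, -, rfl⟩; exact ht.length_le⟩
  have hmemS : (i + L) ∈ {m | ∃ s : List ℕ, s.Sublist w ∧ desSet s = {i} ∧ s.length = m} :=
    ⟨u ++ v, hssub, hdess, by rw [List.length_append, hulen, hvlen]⟩
  have hlow : i + L ≤ lsD w {i} := le_csSup hSbdd hmemS
  have hup : lsD w {i} ≤ i + L := by
    apply csSup_le ⟨i + L, hmemS⟩
    rintro m ⟨s, hssub', hsdes, rfl⟩
    obtain ⟨hi1, hilen, htsort, hdsort, hjun⟩ :=
      desSet_single_decomp (List.Nodup.sublist hssub' hwnd) hsdes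
    have hsplit : s.take i ++ s.drop i <+ w := by
      rw [List.take_append_drop]; exact hssub'
    obtain ⟨w₁, w₂, hweq, ht1, ht2⟩ := List.append_sublist_iff.mp hsplit
    have hdne : s.drop i ≠ [] := by
      intro h
      have := congrArg List.length h
      rw [List.length_drop] at this
      simp at this
      omega
    obtain ⟨c, vt, hdeq⟩ : ∃ c vt, s.drop i = c :: vt :=
      ⟨_, _, (List.cons_head_tail hdne).symm⟩
    rw [hdeq] at ht2
    obtain ⟨m₁, m₂, hw₂eq, hvt⟩ := cons_sublist_decomp ht2
    have hweq2 : w = (w₁ ++ m₁) ++ c :: m₂ := by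
      rw [hweq, hw₂eq, List.append_assoc]
    set p := w₁.length + m₁.length with hp
    have hplen : (w₁ ++ m₁).length = p := by rw [List.length_append]
    have hwp : w.getD p 0 = c := by
      rw [hweq2, ← hplen]
      exact getD_junction _ _ _
    have hplt : p < n := by
      have := congrArg List.length hweq2
      rw [hwlen, List.length_append, List.length_cons, hplen] at this
      omega
    have htakelen : (s.take i).length = i := by rw [List.length_take]; omega
    by_cases hpk : k ≤ p
    · have h1 : c :: m₂ = w.drop p := by
        rw [hweq2, ← hplen, List.drop_left]
      have h2 : c :: vt <+ w.drop p := h1 ▸ (hvt.cons₂ c)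
      have h3 : w.drop p <+ B := by
        have h4 := List.drop_sublist (p - k) (w.drop k)
        rw [List.drop_drop, show k + (p - k) = p by omega] at h4
        exact h4
      have h5 : (s.drop i).length ≤ L := le_lis ((hdeq ▸ h2).trans h3) hdsort
      rw [List.length_drop] at h5
      omega
    · exfalso
      push_neg at hpk
      have htne : s.take i ≠ [] := by
        intro h
        have := congrArg List.length h
        rw [htakelen] at this
        simp at this
        omega
      obtain ⟨w₁a, w₁b, hw₁eq, hdl⟩ := last_sublist_decomp (l := w₁)
        (by rw [List.dropLast_append_getLast htne]; exact ht1)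
      set q' := w₁a.length with hq'
      have hq'lt : q' < w₁.length := by
        have := congrArg List.length hw₁eq
        rw [List.length_append, List.length_cons] at this
        omega
      have hwq' : w.getD q' 0 = (s.take i).getLast htne := by
        rw [hweq, hw₁eq, List.append_assoc, List.cons_append]
        exact getD_junction _ _ _
      have hlast_eq : (s.take i).getLast htne = (s.take i).getD ((s.take i).length - 1) 0 := by
        rw [List.getLast_eq_getElem,
          List.getD_eq_getElem _ _ (by rw [htakelen]; omega : (s.take i).length - 1 < (s.take i).length)]
      have hceq : c = (s.drop i).getD 0 0 := by rw [hdeq]; rfl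
      have hcq : w.getD p 0 < w.getD q' 0 := by
        rw [hwp, hwq', hlast_eq, hceq]
        exact hjun
      obtain ⟨d, hd1, hd2, hd3⟩ :=
        exists_descent (show p < w.length by omega) (show q' ≤ p by omega) hcq
      apply hmin' q' d hd1 (by omega) hd3 (s.take i) htsort (by omega)
      have hsub3 : s.take i <+ w₁a ++ [(s.take i).getLast htne] := by
        conv_lhs => rw [← List.dropLast_append_getLast htne]
        exact hdl.append (List.Sublist.refl _)
      have h2 : w₁a ++ [(s.take i).getLast htne] = w.take (q' + 1) := by
        rw [hweq, hw₁eq, List.append_assoc, List.cons_append, take_junction]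
      rwa [h2] at hsub3
  show lsD w {i} = i + L
  exact le_antisymm hup hlow
end

section
/- Let π ∈ S_n and D ⊆ [n−1] with ls_D(π) ≠ 0 and D ≠ ∅. Suppose 1 ∈ D, let m be the smallest positive integer with m+1 ∉ D, and let k be the smallest index such that the longest decreasing subsequence of the prefix π_{[1,k]} has length m+1. Let D' = {i − m : i ∈ D, i > m}. Then ls_D(π) = m + ls_{D'}(π_{[k,n]}). -/
open List Finset

variable {α : Type*}

namespace Stmt15Aux

lemma ldsSet_bdd (l : List ℕ) :
    BddAbove {m | ∃ s : List ℕ, s.Sublist l ∧ s.Pairwise (· > ·) ∧ s.length = m} :=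
  ⟨l.length, fun r ⟨s, hs, _, hl⟩ => hl ▸ hs.length_le⟩

lemma le_lds {s l : List ℕ} (hs : s.Sublist l) (hsort : s.Pairwise (· > ·)) :
    s.length ≤ lds l :=
  le_csSup (ldsSet_bdd l) ⟨s, hs, hsort, rfl⟩

lemma lds_exists (l : List ℕ) :
    ∃ s : List ℕ, s.Sublist l ∧ s.Pairwise (· > ·) ∧ s.length = lds l :=
  Nat.sSup_mem (s := {m | ∃ s : List ℕ, s.Sublist l ∧ s.Pairwise (· > ·) ∧ s.length = m})
    ⟨0, [], nil_sublist l, Pairwise.nil, rfl⟩ (ldsSet_bdd l)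

lemma lds_le_length (l : List ℕ) : lds l ≤ l.length := by
  obtain ⟨s, h1, _, h3⟩ := lds_exists l
  exact h3 ▸ h1.length_le

lemma lds_mono {l l' : List ℕ} (h : l.Sublist l') : lds l ≤ lds l' := by
  obtain ⟨s, h1, h2, h3⟩ := lds_exists l
  exact h3 ▸ le_lds (h1.trans h) h2

lemma lds_take_succ_le (l : List ℕ) (j : ℕ) :
    lds (l.take (j + 1)) ≤ lds (l.take j) + 1 := by
  apply csSup_le (s := {m | ∃ s : List ℕ, s.Sublist (l.take (j+1)) ∧ s.Pairwise (· > ·) ∧ s.length = m})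
    ⟨0, [], nil_sublist _, Pairwise.nil, rfl⟩
  rintro r ⟨s, hs, hsort, rfl⟩
  by_cases hj : j < l.length
  · rw [take_succ, getElem?_eq_getElem hj] at hs
    simp only [Option.toList_some] at hs
    rw [List.sublist_append_iff] at hs
    obtain ⟨s1, s2, rfl, h1, h2⟩ := hs
    rcases List.sublist_singleton.mp h2 with rfl | rfl
    · simpa using Nat.le_succ_of_le (le_lds h1 (hsort.sublist (sublist_append_left s1 [])))
    · have : s1.Pairwise (· > ·) := hsort.sublist (sublist_append_left s1 [l[j]])
      simpa using Nat.add_le_add_right (le_lds h1 this) 1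
  · rw [take_of_length_le (by omega)] at hs
    rw [take_of_length_le (by omega)]
    exact Nat.le_succ_of_le (le_lds hs hsort)

lemma lds_ivt (l : List ℕ) (c : ℕ) :
    ∀ t : ℕ, c + 1 ≤ lds (l.take t) → ∃ j ≤ t, lds (l.take j) = c + 1 := by
  intro t
  induction t with
  | zero => intro h; simp at h; have := lds_le_length (l.take 0); simp at this; omega
  | succ t ih =>
    intro h
    by_cases h' : c + 1 ≤ lds (l.take t)
    · obtain ⟨j, hj, hje⟩ := ih h'
      exact ⟨j, by omega, hje⟩
    · exact ⟨t + 1, le_refl _, by have := lds_take_succ_le l t; omega⟩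

lemma sublist_split {s w : List ℕ} (h : s.Sublist w) :
    ∀ j, j + 1 ≤ s.length →
      ∃ p, (s.take (j+1)).Sublist (w.take (p+1)) ∧ (s.drop j).Sublist (w.drop p) := by
  induction h with
  | slnil => intro j hj; simp at hj
  | @cons s w a h ih =>
    intro j hj
    obtain ⟨p, hp1, hp2⟩ := ih j hj
    refine ⟨p + 1, ?_, ?_⟩
    · rw [take_succ_cons]; exact hp1.trans (sublist_cons_self _ _)
    · rw [drop_succ_cons]; exact hp2
  | @cons_cons s w a h ih =>
    intro j hj
    match j with
    | 0 =>
      refine ⟨0, ?_, ?_⟩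
      · simpa using Sublist.refl _
      · simpa using h.cons₂ a
    | j + 1 =>
      obtain ⟨p, hp1, hp2⟩ := ih j (by simpa using hj)
      refine ⟨p + 1, ?_, ?_⟩
      · rw [take_succ_cons, take_succ_cons]; exact hp1.cons₂ a
      · rw [drop_succ_cons, drop_succ_cons]; exact hp2

lemma getD_drop' (l : List ℕ) (m j : ℕ) (h : m + j < l.length) :
    (l.drop m).getD j default = l.getD (m + j) default := by
  rw [getD_eq_getElem _ _ (by rw [length_drop]; omega), getD_eq_getElem _ _ h, getElem_drop]

lemma mem_desSet {l : List ℕ} {i : ℕ} :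
    i ∈ desSet l ↔ 1 ≤ i ∧ i ≤ l.length - 1 ∧ l.getD i default < l.getD (i - 1) default := by
  simp [desSet, Finset.mem_filter, Finset.mem_Icc, and_assoc]

lemma desSet_drop (l : List ℕ) (m : ℕ) :
    desSet (l.drop m) = ((desSet l).filter (fun i => m < i)).image (fun i => i - m) := by
  ext j
  simp only [mem_desSet, Finset.mem_image, Finset.mem_filter, length_drop]
  constructor
  · rintro ⟨hj1, hj2, hlt⟩
    have hl2 : m + 2 ≤ l.length := by omega
    rw [getD_drop' _ _ _ (by omega), getD_drop' _ _ _ (by omega)] at hlt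
    refine ⟨m + j, ⟨⟨by omega, by omega, ?_⟩, by omega⟩, by omega⟩
    have e1 : m + j - 1 = m + (j - 1) := by omega
    rw [e1]; exact hlt
  · rintro ⟨i, ⟨⟨hi1, hi2, hlt⟩, him⟩, rfl⟩
    have hl0 : 1 ≤ l.length := by omega
    refine ⟨by omega, by omega, ?_⟩
    rw [getD_drop' _ _ _ (by omega), getD_drop' _ _ _ (by omega)]
    have e1 : m + (i - m) = i := by omega
    have e2 : m + (i - m - 1) = i - 1 := by omega
    rw [e1, e2]; exact hlt

lemma sorted_getD_lt {c : List ℕ} (hc : c.Pairwise (· > ·)) {i j : ℕ} (hij : i < j)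
    (hj : j < c.length) : c.getD j default < c.getD i default := by
  rw [getD_eq_getElem _ _ hj, getD_eq_getElem _ _ (hij.trans hj)]
  exact hc.rel_get_of_lt (a := ⟨i, hij.trans hj⟩) (b := ⟨j, hj⟩) hij

lemma desSet_append_chain {c u : List ℕ} {m : ℕ} (hc : c.Pairwise (· > ·)) (hlen : c.length = m)
    (hu : u ≠ []) (hx : ∀ a ∈ c, u.getD 0 default < a) :
    desSet (c ++ u) = Finset.Icc 1 m ∪ (desSet u).image (fun j => m + j) := by
  have hul : 1 ≤ u.length := length_pos_iff.mpr hu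
  ext i
  simp only [mem_desSet, Finset.mem_union, Finset.mem_Icc, Finset.mem_image, length_append, hlen]
  constructor
  · rintro ⟨hi1, hi2, hlt⟩
    by_cases him : i ≤ m
    · exact Or.inl ⟨hi1, him⟩
    · rw [getD_append_right _ _ _ _ (by omega : c.length ≤ i),
        getD_append_right _ _ _ _ (by omega : c.length ≤ i - 1), hlen] at hlt
      refine Or.inr ⟨i - m, ⟨by omega, by omega, ?_⟩, by omega⟩
      have e1 : i - 1 - m = i - m - 1 := by omega
      rw [e1] at hlt; exact hlt
  · rintro (⟨hi1, hi2⟩ | ⟨j, ⟨hj1, hj2, hlt⟩, rfl⟩)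
    · have hm1 : 1 ≤ m := le_trans hi1 hi2
      refine ⟨hi1, by omega, ?_⟩
      rcases eq_or_lt_of_le hi2 with rfl | hilt
      · rw [getD_append _ _ _ _ (by omega : i - 1 < c.length),
          getD_append_right _ _ _ _ (by omega : c.length ≤ i), hlen]
        simp only [Nat.sub_self]
        have hmem : c.getD (i - 1) default ∈ c := by
          rw [getD_eq_getElem _ _ (by omega : i - 1 < c.length)]
          exact getElem_mem _
        exact hx _ hmem
      · rw [getD_append _ _ _ _ (by omega : i < c.length),
          getD_append _ _ _ _ (by omega : i - 1 < c.length)]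
        exact sorted_getD_lt hc (by omega : i - 1 < i) (by omega)
    · refine ⟨by omega, by omega, ?_⟩
      rw [getD_append_right _ _ _ _ (by omega : c.length ≤ m + j),
        getD_append_right _ _ _ _ (by omega : c.length ≤ m + j - 1), hlen]
      have e1 : m + j - m = j := by omega
      have e2 : m + j - 1 - m = j - 1 := by omega
      rw [e1, e2]; exact hlt

lemma desSet_cons_congr {t : List ℕ} {a b : ℕ}
    (h : t ≠ [] → (t.getD 0 default < a ↔ t.getD 0 default < b)) :
    desSet (a :: t) = desSet (b :: t) := by
  ext i
  simp only [mem_desSet, length_cons]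
  match i with
  | 0 => simp
  | 1 =>
    rcases eq_or_ne t [] with rfl | hne
    · simp
    · have := h hne
      simp only [Nat.add_sub_cancel, getD_cons_succ, getD_cons_zero, Nat.sub_self]
      constructor
      · rintro ⟨h1, h2, h3⟩; exact ⟨h1, h2, this.mp h3⟩
      · rintro ⟨h1, h2, h3⟩; exact ⟨h1, h2, this.mpr h3⟩
  | (i + 2) =>
    simp only [Nat.add_sub_cancel, getD_cons_succ]
    have e : i + 2 - 1 = i + 1 := by omega
    rw [e]
    simp only [getD_cons_succ]

lemma sorted_take_of_desSet {s : List ℕ} {m : ℕ} (hm : ∀ i, 1 ≤ i → i ≤ m → i ∈ desSet s)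
    (hlen : m + 1 ≤ s.length) : (s.take (m + 1)).Pairwise (· > ·) := by
  have : IsChain (· > ·) (s.take (m + 1)) := by
    rw [isChain_iff_getElem]
    intro i h
    rw [length_take] at h
    have hi : i + 1 ≤ m := by omega
    have hmem := hm (i + 1) (by omega) hi
    rw [mem_desSet] at hmem
    obtain ⟨_, _, hlt⟩ := hmem
    rw [getD_eq_getElem _ _ (by omega), getD_eq_getElem _ _ (by omega)] at hlt
    simp only [get_eq_getElem, getElem_take]
    simpa using hlt
  exact isChain_iff_pairwise.mp this

lemma lsDSet_bdd (w : List ℕ) (D : Finset ℕ) :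
    BddAbove {r | ∃ s : List ℕ, s.Sublist w ∧ desSet s = D ∧ s.length = r} :=
  ⟨w.length, fun r ⟨s, hs, _, hl⟩ => hl ▸ hs.length_le⟩

lemma le_lsD {s w : List ℕ} {D : Finset ℕ} (hs : s.Sublist w) (hd : desSet s = D) :
    s.length ≤ lsD w D :=
  le_csSup (lsDSet_bdd w D) ⟨s, hs, hd, rfl⟩

lemma lsD_exists {w : List ℕ} {D : Finset ℕ} (h : lsD w D ≠ 0) :
    ∃ s : List ℕ, s.Sublist w ∧ desSet s = D ∧ s.length = lsD w D := by
  have hne : {r | ∃ s : List ℕ, s.Sublist w ∧ desSet s = D ∧ s.length = r}.Nonempty := by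
    by_contra h'
    rw [Set.not_nonempty_iff_eq_empty] at h'
    apply h
    unfold lsD
    rw [h', csSup_empty]
    rfl
  exact Nat.sSup_mem (s := {r | ∃ s : List ℕ, s.Sublist w ∧ desSet s = D ∧ s.length = r})
    hne (lsDSet_bdd w D)

end Stmt15Aux

open Stmt15Aux

theorem stmt15 (n : ℕ) (π : Equiv.Perm (Fin n)) (D : Finset ℕ)
    (hDsub : D ⊆ Finset.Icc 1 (n - 1)) (h0 : lsD (word π) D ≠ 0)
    (h1 : 1 ∈ D) (m : ℕ) (hm1 : 1 ≤ m) (hm : m + 1 ∉ D)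
    (hmmin : ∀ m' : ℕ, 1 ≤ m' → m' + 1 ∉ D → m ≤ m')
    (k : ℕ) (hk : lds (factor (word π) 1 k) = m + 1)
    (hkmin : ∀ k' : ℕ, lds (factor (word π) 1 k') = m + 1 → k ≤ k') :
    lsD (word π) D =
      m + lsD (factor (word π) k n) ((D.filter (fun i => m < i)).image (fun i => i - m)) := by
  set w := word π with hw
  set D' : Finset ℕ := (D.filter (fun i => m < i)).image (fun i => i - m) with hD'
  have hwlen : w.length = n := by simp [hw, word]
  -- D facts
  have hIccD : ∀ i, 1 ≤ i → i ≤ m → i ∈ D := by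
    intro i hi1 him
    by_contra hiD
    rcases eq_or_lt_of_le hi1 with h | h
    · exact hiD (h ▸ h1)
    · have e : i - 1 + 1 = i := by omega
      have := hmmin (i - 1) (by omega) (by rw [e]; exact hiD)
      omega
  have h1D' : 1 ∉ D' := by
    rw [hD']
    simp only [Finset.mem_image, Finset.mem_filter, not_exists]
    rintro i ⟨⟨hiD, hmi⟩, heq⟩
    have : i = m + 1 := by omega
    exact hm (this ▸ hiD)
  have hunion : Finset.Icc 1 m ∪ D'.image (fun j => m + j) = D := by
    ext i
    simp only [Finset.mem_union, Finset.mem_Icc, Finset.mem_image, hD', Finset.mem_filter]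
    constructor
    · rintro (⟨ha, hb⟩ | ⟨j, ⟨i', ⟨hi'D, hmi'⟩, rfl⟩, rfl⟩)
      · exact hIccD i ha hb
      · have e : m + (i' - m) = i' := by omega
        rw [e]; exact hi'D
    · intro hiD
      rcases le_or_gt i m with h | h
      · exact Or.inl ⟨(Finset.mem_Icc.mp (hDsub hiD)).1, h⟩
      · exact Or.inr ⟨i - m, ⟨i, ⟨hiD, h⟩, rfl⟩, by omega⟩
  -- k facts
  have hfact1 : ∀ j, 1 ≤ j → factor w 1 j = w.take j := by
    intro j hj
    show (w.drop (1 - 1)).take (j - 1 + 1) = w.take j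
    have e : j - 1 + 1 = j := by omega
    rw [e]; rfl
  have hk1 : 1 ≤ k := by
    by_contra h
    have hk0 : k = 0 := by omega
    rw [hk0] at hk
    have h2 : factor w 1 0 = w.take 1 := rfl
    rw [h2] at hk
    have := lds_le_length (w.take 1)
    rw [hk, length_take] at this
    omega
  have hktake : lds (w.take k) = m + 1 := by rw [← hfact1 k hk1]; exact hk
  have hkmin' : ∀ j, lds (w.take j) = m + 1 → k ≤ j := by
    intro j hj
    have hj1 : 1 ≤ j := by
      by_contra h
      have hj0 : j = 0 := by omega
      rw [hj0] at hj
      have := lds_le_length (w.take 0)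
      rw [hj, length_take] at this
      omega
    exact hkmin j (by rw [hfact1 j hj1]; exact hj)
  have hkn : k ≤ n := by
    by_contra h
    have h2 : w.take k = w := take_of_length_le (by omega)
    have h3 : w.take n = w := take_of_length_le (by omega)
    have := hkmin' n (by rw [h3, ← h2]; exact hktake)
    omega
  have hkm : lds (w.take (k - 1)) ≤ m := by
    by_contra h
    obtain ⟨j, hj, hje⟩ := lds_ivt w m (k - 1) (by omega)
    have := hkmin' j hje
    omega
  -- the optimal subsequence for D
  obtain ⟨s₀, hs₀w, hs₀D, hs₀len⟩ := lsD_exists h0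
  have hmemm : m ∈ desSet s₀ := by rw [hs₀D]; exact hIccD m hm1 le_rfl
  have hs₀len' : m + 1 ≤ s₀.length := by
    rw [mem_desSet] at hmemm
    omega
  have hfac : factor w k n = w.drop (k - 1) := by
    show (w.drop (k - 1)).take (n - k + 1) = w.drop (k - 1)
    apply take_of_length_le
    rw [length_drop, hwlen]
    omega
  -- ≤ direction
  have hle : lsD w D ≤ m + lsD (factor w k n) D' := by
    obtain ⟨p, hp1, hp2⟩ := sublist_split hs₀w m hs₀len'
    have hchain : (s₀.take (m + 1)).Pairwise (· > ·) :=
      sorted_take_of_desSet (fun i a b => by rw [hs₀D]; exact hIccD i a b) hs₀len'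
    have hlds : m + 1 ≤ lds (w.take (p + 1)) := by
      have := le_lds hp1 hchain
      rwa [length_take, min_eq_left hs₀len'] at this
    have hpk : k ≤ p + 1 := by
      by_contra hcon
      have he : w.take (p + 1) = (w.take (k - 1)).take (p + 1) := by
        rw [take_take, min_eq_left (by omega)]
      have := lds_mono (he ▸ take_sublist (p + 1) (w.take (k - 1)))
      have h2 := lds_mono (l := w.take (p+1)) (l' := w.take (k-1))
        (by rw [he]; exact take_sublist _ _)
      omega
    have hudesc : desSet (s₀.drop m) = D' := by rw [desSet_drop, hs₀D]
    have husub : (s₀.drop m).Sublist (factor w k n) := by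
      rw [hfac]
      have he : w.drop p = (w.drop (k - 1)).drop (p - (k - 1)) := by
        rw [drop_drop]
        congr 1
        omega
      exact hp2.trans (by rw [he]; exact drop_sublist _ _)
    have := le_lsD husub hudesc
    rw [length_drop, hs₀len] at this
    omega
  -- ≥ direction
  have hge : m + lsD (factor w k n) D' ≤ lsD w D := by
    obtain ⟨k', rfl⟩ : ∃ k', k = k' + 1 := ⟨k - 1, by omega⟩
    have hk'n : k' < n := by omega
    have hk'w : k' < w.length := by omega
    simp only [Nat.add_sub_cancel] at hkm hfac
    obtain ⟨c, hcw, hcsort, hclen⟩ := lds_exists (w.take (k' + 1))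
    rw [hktake] at hclen
    have hxk : w.take (k' + 1) = w.take k' ++ [w[k']] := by
      rw [take_succ, getElem?_eq_getElem hk'w]
      rfl
    set x := w[k'] with hxdef
    rw [hxk, List.sublist_append_iff] at hcw
    obtain ⟨c1, c2, hc12, hc1, hc2⟩ := hcw
    rcases List.sublist_singleton.mp hc2 with rfl | rfl
    · exfalso
      rw [append_nil] at hc12
      subst hc12
      have := le_lds hc1 hcsort
      omega
    · have hc1len : c1.length = m := by
        have := congrArg length hc12
        simp only [length_append, length_cons, length_nil] at this
        omega
      have hc1sort : c1.Pairwise (· > ·) := hcsort.sublist (hc12 ▸ sublist_append_left _ _)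
      have hc1gt : ∀ a ∈ c1, x < a := by
        have hp : List.Pairwise (· > ·) (c1 ++ [x]) := hc12 ▸ hcsort
        rw [pairwise_append] at hp
        exact fun a ha => hp.2.2 a ha x (List.mem_singleton_self x)
      set Lf := lsD (factor w (k' + 1) n) D' with hLfdef
      rcases Nat.eq_zero_or_pos Lf with hLf | hLf
      · rw [hLf, ← hs₀len]
        omega
      · obtain ⟨u, huw, huD, hulen⟩ := lsD_exists (by omega : Lf ≠ 0)
        rw [hfac] at huw
        have hune : u ≠ [] := by
          intro h
          rw [h] at hulen
          simp at hulen
          omega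
        set u0 := u.getD 0 default with hu0def
        have hu0cons : u = u0 :: u.tail := by
          cases u with
          | nil => exact absurd rfl hune
          | cons a t => rfl
        have hdropk : w.drop k' = x :: w.drop (k' + 1) := drop_eq_getElem_cons hk'w
        have hut : u.tail.Sublist (w.drop (k' + 1)) := by
          rw [hdropk] at huw
          rcases List.sublist_cons_iff.mp huw with h | ⟨r, hr, hrs⟩
          · exact (tail_sublist u).trans h
          · rw [hr]; exact hrs
        by_cases hcase : x < u0
        · -- replace the head of u by x
          have hu'sub : (x :: u.tail).Sublist (w.drop k') := by
            rw [hdropk]; exact hut.cons₂ x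
          have hu'len : (x :: u.tail).length = Lf := by
            rw [length_cons, length_tail]
            have : 1 ≤ u.length := length_pos_iff.mpr hune
            omega
          have h1du : 1 ∉ desSet u := by rw [huD]; exact h1D'
          have hu'D : desSet (x :: u.tail) = D' := by
            rcases eq_or_ne u.tail [] with ht | ht
            · rw [← huD]
              conv_rhs => rw [hu0cons]
              exact desSet_cons_congr (fun h => absurd ht h)
            · have htlen : 1 ≤ u.tail.length := length_pos_iff.mpr ht
              have hulen2 : 2 ≤ u.length := by
                have h2 : u.length = u.tail.length + 1 := by
                  conv_lhs => rw [hu0cons]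
                  simp
                omega
              have hnd : ¬ (u.getD 1 default < u.getD 0 default) := by
                intro hlt
                apply h1du
                rw [mem_desSet]
                exact ⟨le_refl 1, by omega, by simpa using hlt⟩
              have hgd1 : u.getD 1 default = u.tail.getD 0 default := by
                conv_lhs => rw [hu0cons]
                rfl
              rw [hgd1, ← hu0def] at hnd
              rw [← huD]
              conv_rhs => rw [hu0cons]
              apply desSet_cons_congr
              intro _
              constructor
              · intro hlt; omega
              · intro hlt; omega
          have hdes : desSet (c1 ++ (x :: u.tail)) = D := by
            rw [desSet_append_chain hc1sort hc1len (by simp)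
              (fun a ha => by simpa using hc1gt a ha), hu'D, hunion]
          have hsub : (c1 ++ (x :: u.tail)).Sublist w := by
            have := hc1.append hu'sub
            rwa [take_append_drop] at this
          have := le_lsD hsub hdes
          rw [length_append, hc1len, hu'len] at this
          exact this
        · -- use u itself
          have hdes : desSet (c1 ++ u) = D := by
            rw [desSet_append_chain hc1sort hc1len hune
              (fun a ha => lt_of_le_of_lt (by rw [← hu0def]; omega) (hc1gt a ha)),
              huD, hunion]
          have hsub : (c1 ++ u).Sublist w := by
            have huw' : u.Sublist (w.drop k') := huw
            have := hc1.append huw'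
            rwa [take_append_drop] at this
          have := le_lsD hsub hdes
          rw [length_append, hc1len, hulen] at this
          exact this
  omega
end

section
/- For any two permutations π, σ ∈ S_n: ls_D(π) = ls_D(σ) for all D ⊆ [n−1] if and only if for all 1 ≤ i ≤ j ≤ n, the factors π_{[i,j]} and σ_{[i,j]} have equal longest increasing subsequence lengths and equal longest decreasing subsequence lengths. -/
open List Finset

variable {α : Type*}

namespace StmtAux


lemma gd_eq {l : List ℕ} {i : ℕ} (h : i < l.length) : l.getD i 0 = l[i] :=
  List.getD_eq_getElem l 0 h

lemma gd_take {l : List ℕ} {x i : ℕ} (h : i < x) : (l.take x).getD i 0 = l.getD i 0 := by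
  rcases Nat.lt_or_ge i l.length with h1 | h1
  · have h2 : i < (l.take x).length := by
      rw [List.length_take]; omega
    rw [List.getD_eq_getElem _ _ h2, List.getD_eq_getElem _ _ h1, List.getElem_take]
  · have h2 : (l.take x).length ≤ i := by rw [List.length_take]; omega
    rw [List.getD_eq_default _ _ h2, List.getD_eq_default _ _ h1]

lemma gd_drop {l : List ℕ} {k i : ℕ} : (l.drop k).getD i 0 = l.getD (k + i) 0 := by
  rcases Nat.lt_or_ge (k + i) l.length with h1 | h1
  · have h2 : i < (l.drop k).length := by rw [List.length_drop]; omega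
    rw [List.getD_eq_getElem _ _ h2, List.getD_eq_getElem _ _ h1, List.getElem_drop]
  · have h2 : (l.drop k).length ≤ i := by rw [List.length_drop]; omega
    rw [List.getD_eq_default _ _ h2, List.getD_eq_default _ _ h1]

lemma gd_append_left {u v : List ℕ} {i : ℕ} (h : i < u.length) :
    (u ++ v).getD i 0 = u.getD i 0 := by
  have h2 : i < (u ++ v).length := by rw [List.length_append]; omega
  rw [List.getD_eq_getElem _ _ h2, List.getD_eq_getElem _ _ h, List.getElem_append_left h]

lemma gd_append_right {u v : List ℕ} {i : ℕ} (h : u.length ≤ i) :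
    (u ++ v).getD i 0 = v.getD (i - u.length) 0 := by
  rcases Nat.lt_or_ge i (u.length + v.length) with h1 | h1
  · have h2 : i < (u ++ v).length := by rw [List.length_append]; omega
    have h3 : i - u.length < v.length := by omega
    rw [List.getD_eq_getElem _ _ h2, List.getD_eq_getElem _ _ h3, List.getElem_append_right h]
  · have h2 : (u ++ v).length ≤ i := by rw [List.length_append]; omega
    rw [List.getD_eq_default _ _ h2, List.getD_eq_default _ _ (by omega)]

lemma mem_desSet {l : List ℕ} {i : ℕ} :
    i ∈ desSet l ↔ 1 ≤ i ∧ i < l.length ∧ l.getD i 0 < l.getD (i - 1) 0 := by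
  simp only [desSet, Finset.mem_filter, Finset.mem_Icc]
  constructor
  · rintro ⟨⟨h1, h2⟩, h3⟩
    exact ⟨h1, by omega, h3⟩
  · rintro ⟨h1, h2, h3⟩
    exact ⟨⟨h1, by omega⟩, h3⟩

lemma desSet_subset (l : List ℕ) : desSet l ⊆ Finset.Icc 1 (l.length - 1) :=
  Finset.filter_subset _ _

lemma desSet_nil : desSet ([] : List ℕ) = ∅ := by
  ext i; simp [mem_desSet]

lemma desSet_take (l : List ℕ) (x : ℕ) :
    desSet (l.take x) = desSet l ∩ Finset.Icc 1 (x - 1) := by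
  ext i
  simp only [mem_desSet, Finset.mem_inter, Finset.mem_Icc, List.length_take]
  constructor
  · rintro ⟨h1, h2, h3⟩
    have hx : i < x := by omega
    have hl : i < l.length := by omega
    rw [gd_take hx, gd_take (by omega)] at h3
    exact ⟨⟨h1, hl, h3⟩, h1, by omega⟩
  · rintro ⟨⟨h1, h2, h3⟩, _, h5⟩
    have hx : i < x := by omega
    refine ⟨h1, by omega, ?_⟩
    rw [gd_take hx, gd_take (by omega)]
    exact h3

lemma mem_desSet_drop {s : List ℕ} {k i : ℕ} :
    i ∈ desSet (s.drop k) ↔ 1 ≤ i ∧ (k + i) ∈ desSet s := by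
  simp only [mem_desSet, List.length_drop]
  constructor
  · rintro ⟨h1, h2, h3⟩
    rw [gd_drop, gd_drop] at h3
    have he : k + (i - 1) = k + i - 1 := by omega
    rw [he] at h3
    exact ⟨h1, by omega, by omega, h3⟩
  · rintro ⟨h1, _, h3, h4⟩
    refine ⟨h1, by omega, ?_⟩
    rw [gd_drop, gd_drop]
    have he : k + (i - 1) = k + i - 1 := by omega
    rw [he]
    exact h4

lemma desSet_of_sorted_lt {l : List ℕ} (h : l.Pairwise (· < ·)) : desSet l = ∅ := by
  ext i
  simp only [mem_desSet, Finset.notMem_empty, iff_false, not_and]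
  intro h1 h2 h3
  have := (List.pairwise_iff_getElem.mp h) (i - 1) i (by omega) h2 (by omega)
  rw [gd_eq h2, gd_eq (by omega : i - 1 < l.length)] at h3
  omega

lemma desSet_of_sorted_gt {l : List ℕ} (h : l.Pairwise (· > ·)) :
    desSet l = Finset.Icc 1 (l.length - 1) := by
  ext i
  simp only [mem_desSet, Finset.mem_Icc]
  constructor
  · rintro ⟨h1, h2, _⟩
    exact ⟨h1, by omega⟩
  · rintro ⟨h1, h2⟩
    have hi : i < l.length := by omega
    have := (List.pairwise_iff_getElem.mp h) (i - 1) i (by omega) hi (by omega)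
    exact ⟨h1, hi, by rw [gd_eq hi, gd_eq (by omega : i - 1 < l.length)]; exact this⟩

lemma sorted_lt_of_nodesc {t : List ℕ} (hnd : t.Nodup) (h : desSet t = ∅) :
    t.Pairwise (· < ·) := by
  have : List.IsChain (· < ·) t := by
    rw [List.isChain_iff_getElem]
    intro i hi
    skip
    have hmem : (i + 1) ∉ desSet t := by rw [h]; exact Finset.notMem_empty _
    rw [mem_desSet] at hmem
    push_neg at hmem
    have h2 : i + 1 < t.length := by omega
    have := hmem (by omega) h2
    rw [gd_eq h2, gd_eq (by omega : i + 1 - 1 < t.length)] at this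
    have hne : t[i + 1 - 1] ≠ t[i + 1] := by
      intro he
      have := (hnd.getElem_inj_iff).mp he
      omega
    exact lt_of_le_of_ne this hne
  exact List.isChain_iff_pairwise.mp this

lemma sorted_gt_of_alldesc {t : List ℕ} (h : desSet t = Finset.Icc 1 (t.length - 1)) :
    t.Pairwise (· > ·) := by
  haveI : IsTrans ℕ (· > ·) := ⟨fun _ _ _ h1 h2 => lt_trans h2 h1⟩
  have : List.IsChain (· > ·) t := by
    rw [List.isChain_iff_getElem]
    intro i hi
    skip
    have hmem : (i + 1) ∈ desSet t := by
      rw [h, Finset.mem_Icc]; omega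
    rw [mem_desSet] at hmem
    obtain ⟨_, h2, h3⟩ := hmem
    rw [gd_eq h2, gd_eq (by omega : i + 1 - 1 < t.length)] at h3
    exact h3
  exact List.isChain_iff_pairwise.mp this

lemma mem_desSet_append {u v : List ℕ} {i : ℕ} (hu : 1 ≤ u.length) (hv : 1 ≤ v.length) :
    i ∈ desSet (u ++ v) ↔
      (i ∈ desSet u ∨ (i = u.length ∧ v.getD 0 0 < u.getD (u.length - 1) 0) ∨
        (u.length < i ∧ (i - u.length) ∈ desSet v)) := by
  simp only [mem_desSet, List.length_append]
  constructor
  · rintro ⟨h1, h2, h3⟩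
    rcases Nat.lt_or_ge i u.length with hc | hc
    · left
      rw [gd_append_left hc, gd_append_left (by omega)] at h3
      exact ⟨h1, hc, h3⟩
    · rcases Nat.eq_or_lt_of_le hc with hc2 | hc2
      · right; left
        rw [gd_append_right (by omega), gd_append_left (by omega)] at h3
        refine ⟨hc2.symm, ?_⟩
        have he1 : i - u.length = 0 := by omega
        have he2 : i - 1 = u.length - 1 := by omega
        rw [he1] at h3; rw [he2] at h3; exact h3
      · right; right
        rw [gd_append_right (by omega), gd_append_right (by omega)] at h3
        have he : i - 1 - u.length = i - u.length - 1 := by omega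
        rw [he] at h3
        exact ⟨hc2, by omega, by omega, h3⟩
  · rintro (⟨h1, h2, h3⟩ | ⟨h1, h2⟩ | ⟨h1, ⟨h2, h3, h4⟩⟩)
    · refine ⟨h1, by omega, ?_⟩
      rw [gd_append_left h2, gd_append_left (by omega)]
      exact h3
    · subst h1
      refine ⟨by omega, by omega, ?_⟩
      rw [gd_append_right (by omega), gd_append_left (by omega)]
      have he1 : u.length - u.length = 0 := by omega
      rw [he1]
      exact h2
    · refine ⟨by omega, by omega, ?_⟩
      rw [gd_append_right (by omega), gd_append_right (by omega)]
      have he : i - 1 - u.length = i - u.length - 1 := by omega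
      rw [he]
      exact h4


end StmtAux

namespace StmtAux

lemma glue_sublist {u v w : List ℕ} {a : ℕ} (hu : u.Sublist (w.take a)) (hv : v.Sublist (w.drop a)) :
    (u ++ v).Sublist w := by
  have h := hu.append hv
  rwa [List.take_append_drop] at h

lemma sublist_split {s M : List α} (h : s.Sublist M) :
    ∀ x, 1 ≤ x → x ≤ s.length →
      ∃ γ, x ≤ γ ∧ γ ≤ M.length ∧ (s.take x).Sublist (M.take γ) ∧
        (s.drop (x - 1)).Sublist (M.drop (γ - 1)) := by
  induction h with
  | slnil =>
    intro x h1 h2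
    simp at h2; omega
  | @cons l1 l2 a h ih =>
    intro x h1 h2
    obtain ⟨γ, hg1, hg2, hg3, hg4⟩ := ih x h1 h2
    refine ⟨γ + 1, by omega, by simp; omega, ?_, ?_⟩
    · rw [List.take_succ_cons]
      exact hg3.trans (List.sublist_cons_self _ _)
    · have he : γ + 1 - 1 = (γ - 1) + 1 := by omega
      rw [he, List.drop_succ_cons]
      exact hg4
  | @cons_cons l1 l2 a h ih =>
    intro x h1 h2
    rcases Nat.eq_or_lt_of_le h1 with he | hlt
    · refine ⟨1, by omega, by simp, ?_, ?_⟩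
      · rw [← he]
        simp only [List.take_succ_cons, List.take_zero]
        exact List.Sublist.refl _
      · rw [← he]
        simp only [Nat.sub_self, List.drop_zero]
        exact h.cons₂ a
    · have hx1 : 1 ≤ x - 1 := by omega
      have hx2 : x - 1 ≤ l1.length := by
        simp at h2; omega
      obtain ⟨γ, hg1, hg2, hg3, hg4⟩ := ih (x - 1) hx1 hx2
      refine ⟨γ + 1, by omega, by simp; omega, ?_, ?_⟩
      · have he : x = (x - 1) + 1 := by omega
        rw [he, List.take_succ_cons, List.take_succ_cons]
        exact hg3.cons₂ a
      · have he : x - 1 = (x - 1 - 1) + 1 := by omega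
        rw [he, List.drop_succ_cons]
        have he2 : γ + 1 - 1 = (γ - 1) + 1 := by omega
        rw [he2, List.drop_succ_cons]
        have he3 : x - 1 - 1 = (x - 1) - 1 := rfl
        rw [he3]
        exact hg4

lemma take_sublist_take {u v : List α} (h : u.Sublist v) (m : ℕ) (hm : m ≤ u.length) :
    (u.take m).Sublist (v.take (v.length - (u.length - m))) := by
  have h1 := ((h.reverse.drop (u.length - m)).reverse : _)
  have e1 : (u.reverse.drop (u.length - m)).reverse = u.take m := by
    rw [List.reverse_drop, List.reverse_reverse, List.length_reverse]
    congr 1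
    omega
  have e2 : (v.reverse.drop (u.length - m)).reverse = v.take (v.length - (u.length - m)) := by
    rw [List.reverse_drop, List.reverse_reverse, List.length_reverse]
  rwa [e1, e2] at h1

lemma sublist_dropLast_of_concat {u N : List α} {a : α} (h : (u ++ [a]).Sublist N) :
    u.Sublist N.dropLast := by
  have h0 : (a :: u.reverse).Sublist N.reverse := by
    have h' := h.reverse
    rwa [List.reverse_append, List.reverse_singleton, List.singleton_append] at h'
  have h1 := ((h0.drop 1).reverse : _)
  simp only [List.drop_succ_cons, List.drop_zero] at h1
  rw [List.reverse_reverse, List.reverse_drop, List.reverse_reverse, List.length_reverse] at h1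
  rwa [List.dropLast_eq_take]

lemma bdd_lis (w : List ℕ) :
    BddAbove {m | ∃ s : List ℕ, s.Sublist w ∧ s.Pairwise (· < ·) ∧ s.length = m} :=
  ⟨w.length, by rintro m ⟨s, hs, _, rfl⟩; exact hs.length_le⟩

lemma bdd_lds (w : List ℕ) :
    BddAbove {m | ∃ s : List ℕ, s.Sublist w ∧ s.Pairwise (· > ·) ∧ s.length = m} :=
  ⟨w.length, by rintro m ⟨s, hs, _, rfl⟩; exact hs.length_le⟩

lemma bdd_lsD (w : List ℕ) (D : Finset ℕ) :
    BddAbove {m | ∃ s : List ℕ, s.Sublist w ∧ desSet s = D ∧ s.length = m} :=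
  ⟨w.length, by rintro m ⟨s, hs, _, rfl⟩; exact hs.length_le⟩

lemma le_lis {w s : List ℕ} (hs : s.Sublist w) (hsort : s.Pairwise (· < ·)) : s.length ≤ lis w :=
  le_csSup (bdd_lis w) ⟨s, hs, hsort, rfl⟩

lemma le_lds {w s : List ℕ} (hs : s.Sublist w) (hsort : s.Pairwise (· > ·)) : s.length ≤ lds w :=
  le_csSup (bdd_lds w) ⟨s, hs, hsort, rfl⟩

lemma le_lsD {w s : List ℕ} (hs : s.Sublist w) : s.length ≤ lsD w (desSet s) :=
  le_csSup (bdd_lsD w _) ⟨s, hs, rfl, rfl⟩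

lemma exists_sorted_lt_of_le_lis {w : List ℕ} {m : ℕ} (h : m ≤ lis w) :
    ∃ s : List ℕ, s.Sublist w ∧ s.Pairwise (· < ·) ∧ s.length = m := by
  rcases Nat.eq_zero_or_pos m with rfl | hm
  · exact ⟨[], List.nil_sublist w, List.Pairwise.nil, rfl⟩
  · rw [lis] at h
    have hne : {m | ∃ s : List ℕ, s.Sublist w ∧ s.Pairwise (· < ·) ∧ s.length = m}.Nonempty := by
      by_contra hc
      rw [Set.not_nonempty_iff_eq_empty] at hc
      rw [hc, csSup_empty] at h
      rw [Nat.bot_eq_zero] at h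
      omega
    obtain ⟨s0, hs0, hsort0, hlen0⟩ := Nat.sSup_mem hne (bdd_lis w)
    refine ⟨s0.take m, (List.take_sublist _ _).trans hs0,
      List.Pairwise.sublist (List.take_sublist _ _) hsort0, ?_⟩
    rw [List.length_take]
    omega

lemma exists_sorted_gt_of_le_lds {w : List ℕ} {m : ℕ} (h : m ≤ lds w) :
    ∃ s : List ℕ, s.Sublist w ∧ s.Pairwise (· > ·) ∧ s.length = m := by
  rcases Nat.eq_zero_or_pos m with rfl | hm
  · exact ⟨[], List.nil_sublist w, List.Pairwise.nil, rfl⟩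
  · rw [lds] at h
    have hne : {m | ∃ s : List ℕ, s.Sublist w ∧ s.Pairwise (· > ·) ∧ s.length = m}.Nonempty := by
      by_contra hc
      rw [Set.not_nonempty_iff_eq_empty] at hc
      rw [hc, csSup_empty] at h
      rw [Nat.bot_eq_zero] at h
      omega
    obtain ⟨s0, hs0, hsort0, hlen0⟩ := Nat.sSup_mem hne (bdd_lds w)
    refine ⟨s0.take m, (List.take_sublist _ _).trans hs0,
      List.Pairwise.sublist (List.take_sublist _ _) hsort0, ?_⟩
    rw [List.length_take]
    omega

lemma exists_of_le_lsD {w : List ℕ} {D : Finset ℕ} {L : ℕ} (hL : 1 ≤ L) (h : L ≤ lsD w D) :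
    ∃ s : List ℕ, s.Sublist w ∧ desSet s = D ∧ L ≤ s.length := by
  rw [lsD] at h
  have hne : {m | ∃ s : List ℕ, s.Sublist w ∧ desSet s = D ∧ s.length = m}.Nonempty := by
    by_contra hc
    rw [Set.not_nonempty_iff_eq_empty] at hc
    rw [hc, csSup_empty] at h
    rw [Nat.bot_eq_zero] at h
    omega
  obtain ⟨s0, hs0, hd0, hlen0⟩ := Nat.sSup_mem hne (bdd_lsD w D)
  exact ⟨s0, hs0, hd0, by omega⟩

lemma ne_of_take_drop {l : List ℕ} (h : l.Nodup) {a b : ℕ} {q : ℕ}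
    (ha : a ∈ l.take q) (hb : b ∈ l.drop q) : a ≠ b := by
  have hnd : (l.take q ++ l.drop q).Nodup := by rw [List.take_append_drop]; exact h
  have hdisj := (List.nodup_append.mp hnd).2.2
  intro he
  exact hdisj a ha b hb he

end StmtAux

namespace StmtAux

lemma lis_factor_le {wp ws : List ℕ} (hws : ws.Nodup)
    (hlen : ws.length = wp.length)
    (Heq : ∀ D : Finset ℕ, D ⊆ Finset.Icc 1 (wp.length - 1) → lsD wp D = lsD ws D)
    {i j : ℕ} (hi : 1 ≤ i) (hij : i ≤ j) (hj : j ≤ wp.length) :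
    lis (factor wp i j) ≤ lis (factor ws i j) := by
  set n := wp.length with hn
  set m := lis (factor wp i j) with hm
  rcases Nat.eq_zero_or_pos m with hm0 | hm1
  · rw [hm0]; exact Nat.zero_le _
  obtain ⟨r, hr_sub, hr_sorted, hr_len⟩ := exists_sorted_lt_of_le_lis (le_refl m)
  have hrle : m ≤ j - i + 1 := by
    have hh := hr_sub.length_le
    simp only [factor, List.length_take, List.length_drop] at hh
    omega
  set L := n - (j - i + 1) + m with hL
  set A := wp.take (i - 1) with hA
  set B := wp.drop j with hB
  set s := A ++ (r ++ B) with hs_def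
  have hmid : (r ++ B).Sublist (wp.drop (i - 1)) := by
    apply glue_sublist (a := j - i + 1)
    · simpa only [factor] using hr_sub
    · rw [List.drop_drop]
      have he : (i - 1) + (j - i + 1) = j := by omega
      rw [he]
  have hs_sub : s.Sublist wp := by
    apply glue_sublist (a := i - 1) _ hmid
    exact List.Sublist.refl _
  have hA_len : A.length = i - 1 := by
    rw [hA, List.length_take]; omega
  have hB_len : B.length = n - j := by
    rw [hB, List.length_drop]
  have hs_len : s.length = L := by
    simp only [hs_def, List.length_append, hA_len, hr_len, hB_len]; omega
  have hgd_mid : ∀ q, i - 1 ≤ q → q ≤ i + m - 2 → s.getD q 0 = r.getD (q - (i - 1)) 0 := by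
    intro q h1 h2
    rw [hs_def, gd_append_right (by omega : A.length ≤ q), gd_append_left]
    · rw [hA_len]
    · rw [hA_len]; omega
  have hband : ∀ d, i ≤ d → d ≤ i + m - 2 → d ∉ desSet s := by
    intro d h1 h2 hmem
    rw [mem_desSet] at hmem
    obtain ⟨_, hd2, hd3⟩ := hmem
    rw [hgd_mid d (by omega) h2, hgd_mid (d - 1) (by omega) (by omega)] at hd3
    have hq1 : d - (i - 1) < r.length := by omega
    have hq2 : d - 1 - (i - 1) < r.length := by omega
    rw [List.getD_eq_getElem _ _ hq1, List.getD_eq_getElem _ _ hq2] at hd3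
    have := (List.pairwise_iff_getElem.mp hr_sorted) (d - 1 - (i - 1)) (d - (i - 1)) hq2 hq1
      (by omega)
    omega
  have hDsub : desSet s ⊆ Finset.Icc 1 (n - 1) := by
    intro d hd
    have hh := desSet_subset s hd
    rw [Finset.mem_Icc] at hh ⊢
    rw [hs_len] at hh
    omega
  have hlsd : L ≤ lsD wp (desSet s) := hs_len ▸ le_lsD hs_sub
  rw [Heq _ hDsub] at hlsd
  obtain ⟨s', hs'_sub, hs'_des, hs'_len⟩ := exists_of_le_lsD (by omega : 1 ≤ L) hlsd
  set t := s'.take L with ht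
  have ht_sub : t.Sublist ws := (List.take_sublist _ _).trans hs'_sub
  have ht_des : desSet t = desSet s := by
    rw [ht, desSet_take, hs'_des]
    apply Finset.inter_eq_left.mpr
    intro d hd
    have hh := desSet_subset s hd
    rw [Finset.mem_Icc] at hh ⊢
    rw [hs_len] at hh
    omega
  have ht_len : t.length = L := by rw [ht, List.length_take]; omega
  set r' := (t.drop (i - 1)).take m with hr'
  have hr'_len : r'.length = m := by
    rw [hr', List.length_take, List.length_drop, ht_len]; omega
  have hnd_t : t.Nodup := ht_sub.nodup hws
  have hgd_r' : ∀ q, q < m → r'.getD q 0 = t.getD (i - 1 + q) 0 := by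
    intro q hq
    rw [hr', gd_take hq, gd_drop]
  have hr'_sorted : r'.Pairwise (· < ·) := by
    have hchain : List.IsChain (· < ·) r' := by
      rw [List.isChain_iff_getElem]
      intro q hq
      rw [hr'_len] at hq
      skip
      have hnd : (i + q) ∉ desSet t := by
        rw [ht_des]
        exact hband _ (by omega) (by omega)
      rw [mem_desSet] at hnd
      push_neg at hnd
      have hlt : i + q < t.length := by rw [ht_len, hL]; omega
      have hle := hnd (by omega) hlt
      rw [gd_eq hlt, gd_eq (by omega : i + q - 1 < t.length)] at hle
      have he1 : r'.getD q 0 = t.getD (i - 1 + q) 0 := hgd_r' q (by omega)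
      have he2 : r'.getD (q + 1) 0 = t.getD (i - 1 + (q + 1)) 0 := hgd_r' (q + 1) (by omega)
      have hq1 : q < r'.length := by rw [hr'_len]; omega
      have hq2 : q + 1 < r'.length := by rw [hr'_len]; omega
      rw [gd_eq hq1] at he1
      rw [gd_eq hq2] at he2
      have hi1 : i - 1 + q < t.length := by omega
      have hi2 : i - 1 + (q + 1) < t.length := by omega
      rw [gd_eq hi1] at he1
      rw [gd_eq hi2] at he2
      have hee : t[i + q - 1] = t[i - 1 + q]'hi1 := by
        congr 1; omega
      have hee2 : t[i + q]'hlt = t[i - 1 + (q + 1)]'hi2 := by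
        congr 1; omega
      rw [hee, hee2] at hle
      have hne : t[i - 1 + q]'hi1 ≠ t[i - 1 + (q + 1)]'hi2 := by
        intro hcon
        have := (hnd_t.getElem_inj_iff).mp hcon
        omega
      rw [he1, he2]
      exact lt_of_le_of_ne hle hne
    exact List.isChain_iff_pairwise.mp hchain
  have hr'_sub : r'.Sublist (factor ws i j) := by
    have h1 : (t.drop (i - 1)).Sublist (ws.drop (i - 1)) := ht_sub.drop (i - 1)
    have h2 := take_sublist_take h1 m (by rw [List.length_drop, ht_len]; omega)
    have he : (ws.drop (i - 1)).length - ((t.drop (i - 1)).length - m) = j - i + 1 := by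
      rw [List.length_drop, List.length_drop, ht_len, hlen]
      omega
    rw [he] at h2
    simpa only [factor] using h2
  have hfin := le_lis hr'_sub hr'_sorted
  rw [hr'_len] at hfin
  exact hfin

lemma lds_factor_le {wp ws : List ℕ} (hws : ws.Nodup)
    (hlen : ws.length = wp.length)
    (Heq : ∀ D : Finset ℕ, D ⊆ Finset.Icc 1 (wp.length - 1) → lsD wp D = lsD ws D)
    {i j : ℕ} (hi : 1 ≤ i) (hij : i ≤ j) (hj : j ≤ wp.length) :
    lds (factor wp i j) ≤ lds (factor ws i j) := by
  set n := wp.length with hn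
  set m := lds (factor wp i j) with hm
  rcases Nat.eq_zero_or_pos m with hm0 | hm1
  · rw [hm0]; exact Nat.zero_le _
  obtain ⟨r, hr_sub, hr_sorted, hr_len⟩ := exists_sorted_gt_of_le_lds (le_refl m)
  have hrle : m ≤ j - i + 1 := by
    have hh := hr_sub.length_le
    simp only [factor, List.length_take, List.length_drop] at hh
    omega
  set L := n - (j - i + 1) + m with hL
  set A := wp.take (i - 1) with hA
  set B := wp.drop j with hB
  set s := A ++ (r ++ B) with hs_def
  have hmid : (r ++ B).Sublist (wp.drop (i - 1)) := by
    apply glue_sublist (a := j - i + 1)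
    · simpa only [factor] using hr_sub
    · rw [List.drop_drop]
      have he : (i - 1) + (j - i + 1) = j := by omega
      rw [he]
  have hs_sub : s.Sublist wp := by
    apply glue_sublist (a := i - 1) _ hmid
    exact List.Sublist.refl _
  have hA_len : A.length = i - 1 := by
    rw [hA, List.length_take]; omega
  have hB_len : B.length = n - j := by
    rw [hB, List.length_drop]
  have hs_len : s.length = L := by
    simp only [hs_def, List.length_append, hA_len, hr_len, hB_len]; omega
  have hgd_mid : ∀ q, i - 1 ≤ q → q ≤ i + m - 2 → s.getD q 0 = r.getD (q - (i - 1)) 0 := by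
    intro q h1 h2
    rw [hs_def, gd_append_right (by omega : A.length ≤ q), gd_append_left]
    · rw [hA_len]
    · rw [hA_len]; omega
  have hband : ∀ d, i ≤ d → d ≤ i + m - 2 → d ∈ desSet s := by
    intro d h1 h2
    rw [mem_desSet]
    refine ⟨by omega, by rw [hs_len, hL]; omega, ?_⟩
    rw [hgd_mid d (by omega) h2, hgd_mid (d - 1) (by omega) (by omega)]
    have hq1 : d - (i - 1) < r.length := by omega
    have hq2 : d - 1 - (i - 1) < r.length := by omega
    rw [List.getD_eq_getElem _ _ hq1, List.getD_eq_getElem _ _ hq2]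
    exact (List.pairwise_iff_getElem.mp hr_sorted) (d - 1 - (i - 1)) (d - (i - 1)) hq2 hq1
      (by omega)
  have hDsub : desSet s ⊆ Finset.Icc 1 (n - 1) := by
    intro d hd
    have hh := desSet_subset s hd
    rw [Finset.mem_Icc] at hh ⊢
    rw [hs_len] at hh
    omega
  have hlsd : L ≤ lsD wp (desSet s) := hs_len ▸ le_lsD hs_sub
  rw [Heq _ hDsub] at hlsd
  obtain ⟨s', hs'_sub, hs'_des, hs'_len⟩ := exists_of_le_lsD (by omega : 1 ≤ L) hlsd
  set t := s'.take L with ht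
  have ht_sub : t.Sublist ws := (List.take_sublist _ _).trans hs'_sub
  have ht_des : desSet t = desSet s := by
    rw [ht, desSet_take, hs'_des]
    apply Finset.inter_eq_left.mpr
    intro d hd
    have hh := desSet_subset s hd
    rw [Finset.mem_Icc] at hh ⊢
    rw [hs_len] at hh
    omega
  have ht_len : t.length = L := by rw [ht, List.length_take]; omega
  set r' := (t.drop (i - 1)).take m with hr'
  have hr'_len : r'.length = m := by
    rw [hr', List.length_take, List.length_drop, ht_len]; omega
  have hnd_t : t.Nodup := ht_sub.nodup hws
  have hgd_r' : ∀ q, q < m → r'.getD q 0 = t.getD (i - 1 + q) 0 := by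
    intro q hq
    rw [hr', gd_take hq, gd_drop]
  have hr'_sorted : r'.Pairwise (· > ·) := by
    haveI : IsTrans ℕ (· > ·) := ⟨fun _ _ _ h1 h2 => lt_trans h2 h1⟩
    have hchain : List.IsChain (· > ·) r' := by
      rw [List.isChain_iff_getElem]
      intro q hq
      rw [hr'_len] at hq
      skip
      have hnd : (i + q) ∈ desSet t := by
        rw [ht_des]
        exact hband _ (by omega) (by omega)
      rw [mem_desSet] at hnd
      obtain ⟨-, hlt, hle⟩ := hnd
      rw [gd_eq hlt, gd_eq (by omega : i + q - 1 < t.length)] at hle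
      have he1 : r'.getD q 0 = t.getD (i - 1 + q) 0 := hgd_r' q (by omega)
      have he2 : r'.getD (q + 1) 0 = t.getD (i - 1 + (q + 1)) 0 := hgd_r' (q + 1) (by omega)
      have hq1 : q < r'.length := by rw [hr'_len]; omega
      have hq2 : q + 1 < r'.length := by rw [hr'_len]; omega
      rw [gd_eq hq1] at he1
      rw [gd_eq hq2] at he2
      have hi1 : i - 1 + q < t.length := by omega
      have hi2 : i - 1 + (q + 1) < t.length := by omega
      rw [gd_eq hi1] at he1
      rw [gd_eq hi2] at he2
      have hee : t[i + q - 1] = t[i - 1 + q]'hi1 := by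
        congr 1; omega
      have hee2 : t[i + q]'hlt = t[i - 1 + (q + 1)]'hi2 := by
        congr 1; omega
      rw [hee, hee2] at hle
      rw [he1, he2]
      exact hle
    exact List.isChain_iff_pairwise.mp hchain
  have hr'_sub : r'.Sublist (factor ws i j) := by
    have h1 : (t.drop (i - 1)).Sublist (ws.drop (i - 1)) := ht_sub.drop (i - 1)
    have h2 := take_sublist_take h1 m (by rw [List.length_drop, ht_len]; omega)
    have he : (ws.drop (i - 1)).length - ((t.drop (i - 1)).length - m) = j - i + 1 := by
      rw [List.length_drop, List.length_drop, ht_len, hlen]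
      omega
    rw [he] at h2
    simpa only [factor] using h2
  have hfin := le_lds hr'_sub hr'_sorted
  rw [hr'_len] at hfin
  exact hfin


end StmtAux

namespace StmtAux

lemma prop_up {D : Finset ℕ} {L x : ℕ} (hx : 1 ≤ x)
    (h : ∀ u, x < u → u ≤ L - 1 → ((u ∈ D) ↔ (u - 1 ∈ D))) :
    ∀ u, x ≤ u → u ≤ L - 1 → ((u ∈ D) ↔ (x ∈ D)) := by
  intro u
  induction u with
  | zero => intro h1 _; exact absurd h1 (by omega)
  | succ v ihv =>
    intro h1 h2
    rcases Nat.eq_or_lt_of_le h1 with he | hlt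
    · exact he ▸ Iff.rfl
    · rw [h (v + 1) hlt h2]
      exact ihv (by omega) (by omega)

lemma transfer {wp ws : List ℕ} (hp : wp.Nodup) (hs : ws.Nodup)
    (hlen : ws.length = wp.length)
    (H : ∀ a b : ℕ, 1 ≤ a → a ≤ b → b ≤ wp.length →
      lis (factor wp a b) = lis (factor ws a b) ∧ lds (factor wp a b) = lds (factor ws a b)) :
    ∀ L : ℕ, ∀ (c : ℕ) (D : Finset ℕ) (s : List ℕ), c ≤ wp.length → s.Sublist (wp.take c) →
      desSet s = D → s.length = L →
      ∃ t : List ℕ, t.Sublist (ws.take c) ∧ desSet t = D ∧ t.length = L := by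
  classical
  intro L
  induction L using Nat.strong_induction_on with
  | _ L IH =>
  intro c D s hc hsub hdes hslen
  rcases Nat.eq_zero_or_pos L with rfl | hL1
  · have hs0 : s = [] := List.length_eq_zero_iff.mp hslen
    refine ⟨[], List.nil_sublist _, ?_, rfl⟩
    rw [desSet_nil, ← hdes, hs0, desSet_nil]
  have hc1 : 1 ≤ c := by
    rcases Nat.eq_zero_or_pos c with rfl | h
    · have hh := hsub.length_le
      simp only [List.take_zero, List.length_nil, Nat.le_zero] at hh
      omega
    · exact h
  have hDIcc : D ⊆ Finset.Icc 1 (L - 1) := by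
    rw [← hdes]
    have hh := desSet_subset s
    rwa [hslen] at hh
  set Sw := (Finset.Icc 2 (L - 1)).filter (fun u => ¬((u ∈ D) ↔ (u - 1 ∈ D))) with hSw
  have hnds : s.Nodup := hsub.nodup ((List.take_sublist c wp).nodup hp)
  rcases Finset.eq_empty_or_nonempty Sw with hem | hne
  · -- monotone pattern
    have hprop : ∀ u, 1 ≤ u → u ≤ L - 1 → ((u ∈ D) ↔ (1 ∈ D)) := by
      apply prop_up le_rfl
      intro u hu1 hu2
      by_contra hcon
      have hmem : u ∈ Sw := by
        rw [hSw]
        exact Finset.mem_filter.mpr ⟨Finset.mem_Icc.mpr ⟨by omega, hu2⟩, hcon⟩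
      rw [hem] at hmem
      exact absurd hmem (Finset.notMem_empty u)
    have hfacp : factor wp 1 c = wp.take c := by
      simp only [factor, Nat.sub_self, List.drop_zero]
      congr 1
      omega
    have hfacs : factor ws 1 c = ws.take c := by
      simp only [factor, Nat.sub_self, List.drop_zero]
      congr 1
      omega
    by_cases h1D : 1 ∈ D
    · have hDeq : D = Finset.Icc 1 (L - 1) := by
        apply Finset.Subset.antisymm hDIcc
        intro u hu
        rw [Finset.mem_Icc] at hu
        exact (hprop u hu.1 hu.2).mpr h1D
      have hsort : s.Pairwise (· > ·) := by
        apply sorted_gt_of_alldesc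
        rw [hdes, hslen, hDeq]
      have hge : L ≤ lds (factor wp 1 c) := by
        rw [hfacp]
        exact hslen ▸ le_lds hsub hsort
      rw [(H 1 c le_rfl hc1 hc).2] at hge
      obtain ⟨t, ht1, ht2, ht3⟩ := exists_sorted_gt_of_le_lds hge
      rw [hfacs] at ht1
      refine ⟨t, ht1, ?_, ht3⟩
      rw [desSet_of_sorted_gt ht2, ht3, hDeq]
    · have hDeq : D = ∅ := by
        apply Finset.eq_empty_iff_forall_notMem.mpr
        intro u hu
        have hu' := hDIcc hu
        rw [Finset.mem_Icc] at hu'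
        exact h1D ((hprop u hu'.1 hu'.2).mp hu)
      have hsort : s.Pairwise (· < ·) := by
        apply sorted_lt_of_nodesc hnds
        rw [hdes, hDeq]
      have hge : L ≤ lis (factor wp 1 c) := by
        rw [hfacp]
        exact hslen ▸ le_lis hsub hsort
      rw [(H 1 c le_rfl hc1 hc).1] at hge
      obtain ⟨t, ht1, ht2, ht3⟩ := exists_sorted_lt_of_le_lis hge
      rw [hfacs] at ht1
      refine ⟨t, ht1, ?_, ht3⟩
      rw [desSet_of_sorted_lt ht2, hDeq]
  · -- there is a switch
    set x := Sw.max' hne with hx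
    have hxmem : x ∈ Sw := Finset.max'_mem _ _
    rw [hSw, Finset.mem_filter, Finset.mem_Icc] at hxmem
    obtain ⟨⟨hx2, hxL⟩, hxsw⟩ := hxmem
    have hprop : ∀ u, x ≤ u → u ≤ L - 1 → ((u ∈ D) ↔ (x ∈ D)) := by
      apply prop_up (by omega)
      intro u hu1 hu2
      by_contra hcon
      have hmem : u ∈ Sw := by
        rw [hSw]
        exact Finset.mem_filter.mpr ⟨Finset.mem_Icc.mpr ⟨by omega, hu2⟩, hcon⟩
      have hle := Finset.le_max' Sw u hmem
      rw [← hx] at hle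
      omega
    obtain ⟨γ, hγ1, hγ2, hbody_p, htail_p⟩ := sublist_split hsub x (by omega) (by omega)
    rw [List.length_take] at hγ2
    have hγ2' : γ ≤ c := by omega
    have hγn : γ ≤ wp.length := by omega
    have hbody_p' : (s.take x).Sublist (wp.take γ) := by
      rwa [List.take_take, min_eq_left hγ2'] at hbody_p
    have htail_p' : (s.drop (x - 1)).Sublist (factor wp γ c) := by
      have he : (wp.take c).drop (γ - 1) = factor wp γ c := by
        rw [List.drop_take]
        simp only [factor]
        congr 1
        omega
      rwa [he] at htail_p
    set r := L - x + 1 with hr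
    have hr2 : 2 ≤ r := by omega
    have htail_len : (s.drop (x - 1)).length = r := by
      rw [List.length_drop]
      omega
    obtain ⟨bodyσ, hbσ_sub, hbσ_des, hbσ_len⟩ :=
      IH x (by omega) γ (D ∩ Finset.Icc 1 (x - 1)) (s.take x) hγn hbody_p'
        (by rw [desSet_take, hdes]) (by rw [List.length_take]; omega)
    have hbσ_sub' : bodyσ.Sublist ((ws.take c).take γ) := by
      rw [List.take_take, min_eq_left hγ2']
      exact hbσ_sub
    -- positional homes for the tail witness
    have heB : (ws.take c).drop (γ - 1) = factor ws γ c := by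
      rw [List.drop_take]
      simp only [factor]
      congr 1
      omega
    have heBd : (factor ws γ c).drop 1 = (ws.take c).drop γ := by
      simp only [factor]
      rw [List.drop_take, List.drop_drop, List.drop_take]
      have e1 : γ - 1 + 1 = γ := by omega
      have e2 : c - γ + 1 - 1 = c - γ := by omega
      rw [e1, e2]
    -- derived decomposition of bodyσ for dropping its last element
    have hxblen : x - 1 < bodyσ.length := by omega
    have hdrop1 : bodyσ.drop (x - 1) = [bodyσ[x - 1]'hxblen] := by
      rw [List.drop_eq_getElem_cons hxblen]
      have he : x - 1 + 1 = bodyσ.length := by omega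
      rw [he, List.drop_length]
    have hconcat : (bodyσ.take (x - 1) ++ [bodyσ[x - 1]'hxblen]).Sublist (ws.take γ) := by
      rw [← hdrop1, List.take_append_drop]
      exact hbσ_sub
    have hbody_take : (bodyσ.take (x - 1)).Sublist (ws.take (γ - 1)) := by
      have hh := sublist_dropLast_of_concat hconcat
      have hdlast : (ws.take γ).dropLast = ws.take (γ - 1) := by
        rw [List.dropLast_eq_take, List.length_take, List.take_take]
        congr 1
        rw [hlen]
        omega
      rwa [hdlast] at hh
    have hulen : (bodyσ.take (x - 1)).length = x - 1 := by
      rw [List.length_take]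
      omega
    have hdtake : desSet (bodyσ.take (x - 1)) = D ∩ Finset.Icc 1 (x - 1 - 1) := by
      rw [desSet_take, hbσ_des]
      ext d
      simp only [Finset.mem_inter, Finset.mem_Icc]
      constructor
      · rintro ⟨⟨q1, q2, q3⟩, q4, q5⟩
        exact ⟨q1, q4, by omega⟩
      · rintro ⟨q1, q2, q3⟩
        exact ⟨⟨q1, q2, by omega⟩, q2, by omega⟩
    by_cases hxD : x ∈ D
    · -- Branch B : descending tail
      have hx1D : x - 1 ∉ D := by
        intro hcon
        exact hxsw ⟨fun _ => hcon, fun _ => hxD⟩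
      have htail_des : desSet (s.drop (x - 1)) = Finset.Icc 1 (r - 1) := by
        ext d
        constructor
        · intro hd
          have hb := desSet_subset _ hd
          rwa [htail_len] at hb
        · intro hd
          rw [Finset.mem_Icc] at hd
          rw [mem_desSet_drop]
          refine ⟨hd.1, ?_⟩
          rw [hdes]
          exact (hprop (x - 1 + d) (by omega) (by omega)).mpr hxD
      have htail_sorted : (s.drop (x - 1)).Pairwise (· > ·) := by
        apply sorted_gt_of_alldesc
        rw [htail_des, htail_len]
      have hge : r ≤ lds (factor wp γ c) := htail_len ▸ le_lds htail_p' htail_sorted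
      rw [(H γ c (by omega) hγ2' hc).2] at hge
      obtain ⟨B, hB_sub, hB_sorted, hB_len⟩ := exists_sorted_gt_of_le_lds hge
      have hb12 : B.getD 1 0 < B.getD 0 0 := by
        rw [gd_eq (by omega : 0 < B.length), gd_eq (by omega : 1 < B.length)]
        exact (List.pairwise_iff_getElem.mp hB_sorted) 0 1 (by omega) (by omega) (by omega)
      have hBdrop_sub : (B.drop 1).Sublist ((ws.take c).drop γ) := by
        have h1 := hB_sub.drop 1
        rwa [heBd] at h1
      have hB_home : B.Sublist ((ws.take c).drop (γ - 1)) := by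
        rw [heB]; exact hB_sub
      have hx1mem : (x - 1) ∉ desSet bodyσ := by
        rw [hbσ_des]
        intro hmem
        exact hx1D (Finset.mem_inter.mp hmem).1
      rw [mem_desSet] at hx1mem
      push_neg at hx1mem
      have hx1le := hx1mem (by omega) (by omega)
      by_cases hcase : B.getD 1 0 < bodyσ.getD (x - 1) 0
      · refine ⟨bodyσ ++ B.drop 1, glue_sublist hbσ_sub' hBdrop_sub, ?_, ?_⟩
        · ext d
          rw [mem_desSet_append (by omega) (by rw [List.length_drop, hB_len]; omega)]
          have hBd_des : desSet (B.drop 1) = Finset.Icc 1 (r - 1 - 1) := by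
            rw [desSet_of_sorted_gt (List.Pairwise.sublist (List.drop_sublist _ _) hB_sorted)]
            rw [List.length_drop, hB_len]
          constructor
          · rintro (hd | ⟨hd1, hd2⟩ | ⟨hd1, hd2⟩)
            · rw [hbσ_des] at hd
              exact (Finset.mem_inter.mp hd).1
            · rw [hbσ_len] at hd1
              exact hd1 ▸ hxD
            · rw [hbσ_len] at hd1
              rw [hBd_des, Finset.mem_Icc] at hd2
              exact (hprop d (by omega) (by omega)).mpr hxD
          · intro hd
            have hdb := hDIcc hd
            rw [Finset.mem_Icc] at hdb
            rcases Nat.lt_trichotomy d x with hlt2 | heq | hgt2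
            · left
              rw [hbσ_des]
              exact Finset.mem_inter.mpr ⟨hd, Finset.mem_Icc.mpr ⟨hdb.1, by omega⟩⟩
            · right; left
              refine ⟨by rw [hbσ_len]; exact heq, ?_⟩
              rw [gd_drop, hbσ_len]
              have he10 : (1 : ℕ) + 0 = 1 := rfl
              rw [he10]
              exact hcase
            · right; right
              rw [hbσ_len, hBd_des, Finset.mem_Icc]
              exact ⟨hgt2, by omega, by omega⟩
        · rw [List.length_append, hbσ_len, List.length_drop, hB_len]
          omega
      · have hap_mem : bodyσ.getD (x - 1) 0 ∈ ws.take γ := by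
          rw [gd_eq hxblen]
          exact hbσ_sub.subset (List.getElem_mem _)
        have hb2_mem : B.getD 1 0 ∈ ws.drop γ := by
          have hblen : 0 < (B.drop 1).length := by rw [List.length_drop, hB_len]; omega
          have he : B.getD 1 0 = (B.drop 1)[0]'hblen := by
            rw [← gd_eq hblen, gd_drop]
          rw [he]
          have hmem := hBdrop_sub.subset (List.getElem_mem hblen)
          have he2 : (ws.take c).drop γ = (ws.drop γ).take (c - γ) := List.drop_take
          rw [he2] at hmem
          exact List.take_subset _ _ hmem
        have hne := ne_of_take_drop hs hap_mem hb2_mem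
        have hgt : bodyσ.getD (x - 1) 0 < B.getD 1 0 := by omega
        by_cases hcase1 : B.getD 0 0 < bodyσ.getD (x - 1 - 1) 0
        · exfalso
          omega
        · refine ⟨bodyσ.take (x - 1) ++ B, glue_sublist (a := γ - 1) ?_ hB_home, ?_, ?_⟩
          · rw [List.take_take, min_eq_left (by omega : γ - 1 ≤ c)]
            exact hbody_take
          · ext d
            rw [mem_desSet_append (by rw [hulen]; omega) (by omega)]
            rw [hulen, hdtake]
            have hB_des : desSet B = Finset.Icc 1 (r - 1) := by
              rw [desSet_of_sorted_gt hB_sorted, hB_len]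
            constructor
            · rintro (hd | ⟨hd1, hd2⟩ | ⟨hd1, hd2⟩)
              · exact (Finset.mem_inter.mp hd).1
              · exfalso
                rw [gd_take (by omega : x - 1 - 1 < x - 1)] at hd2
                exact hcase1 hd2
              · rw [hB_des, Finset.mem_Icc] at hd2
                exact (hprop d (by omega) (by omega)).mpr hxD
            · intro hd
              have hdb := hDIcc hd
              rw [Finset.mem_Icc] at hdb
              rcases Nat.lt_trichotomy d (x - 1) with hlt2 | heq | hgt2
              · left
                exact Finset.mem_inter.mpr ⟨hd, Finset.mem_Icc.mpr ⟨hdb.1, by omega⟩⟩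
              · exact absurd (heq ▸ hd) hx1D
              · right; right
                rw [hB_des, Finset.mem_Icc]
                exact ⟨hgt2, by omega, by omega⟩
          · rw [List.length_append, hulen, hB_len]
            omega
    · -- Branch A : ascending tail
      have hx1D : x - 1 ∈ D := by
        by_contra hcon
        exact hxsw ⟨fun h => absurd h hxD, fun h => absurd h hcon⟩
      have htail_des : desSet (s.drop (x - 1)) = ∅ := by
        apply Finset.eq_empty_iff_forall_notMem.mpr
        intro d hd
        rw [mem_desSet_drop] at hd
        obtain ⟨hd1, hd2⟩ := hd
        have hbd := desSet_subset s hd2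
        rw [Finset.mem_Icc, hslen] at hbd
        rw [hdes] at hd2
        exact hxD ((hprop (x - 1 + d) (by omega) (by omega)).mp hd2)
      have htail_sorted : (s.drop (x - 1)).Pairwise (· < ·) :=
        sorted_lt_of_nodesc ((List.drop_sublist _ _).nodup hnds) htail_des
      have hge : r ≤ lis (factor wp γ c) := htail_len ▸ le_lis htail_p' htail_sorted
      rw [(H γ c (by omega) hγ2' hc).1] at hge
      obtain ⟨B, hB_sub, hB_sorted, hB_len⟩ := exists_sorted_lt_of_le_lis hge
      have hb12 : B.getD 0 0 < B.getD 1 0 := by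
        rw [gd_eq (by omega : 0 < B.length), gd_eq (by omega : 1 < B.length)]
        exact (List.pairwise_iff_getElem.mp hB_sorted) 0 1 (by omega) (by omega) (by omega)
      have hBdrop_sub : (B.drop 1).Sublist ((ws.take c).drop γ) := by
        have h1 := hB_sub.drop 1
        rwa [heBd] at h1
      have hB_home : B.Sublist ((ws.take c).drop (γ - 1)) := by
        rw [heB]; exact hB_sub
      have hx1mem : (x - 1) ∈ desSet bodyσ := by
        rw [hbσ_des]
        exact Finset.mem_inter.mpr ⟨hx1D, Finset.mem_Icc.mpr ⟨by omega, le_rfl⟩⟩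
      rw [mem_desSet] at hx1mem
      obtain ⟨-, hx1lt, hx1des⟩ := hx1mem
      by_cases hcase : bodyσ.getD (x - 1) 0 < B.getD 1 0
      · refine ⟨bodyσ ++ B.drop 1, glue_sublist hbσ_sub' hBdrop_sub, ?_, ?_⟩
        · ext d
          rw [mem_desSet_append (by omega) (by rw [List.length_drop, hB_len]; omega)]
          constructor
          · rintro (hd | ⟨hd1, hd2⟩ | ⟨hd1, hd2⟩)
            · rw [hbσ_des] at hd
              exact (Finset.mem_inter.mp hd).1
            · exfalso
              rw [gd_drop, hbσ_len] at hd2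
              have he10 : (1 : ℕ) + 0 = 1 := rfl
              rw [he10] at hd2
              omega
            · exfalso
              have hh : desSet (B.drop 1) = ∅ :=
                desSet_of_sorted_lt (List.Pairwise.sublist (List.drop_sublist _ _) hB_sorted)
              rw [hh] at hd2
              exact absurd hd2 (Finset.notMem_empty _)
          · intro hd
            left
            rw [hbσ_des]
            have hdb := hDIcc hd
            rw [Finset.mem_Icc] at hdb
            have hdx : d ≤ x - 1 := by
              by_contra hcon
              exact hxD ((hprop d (by omega) (by omega)).mp hd)
            exact Finset.mem_inter.mpr ⟨hd, Finset.mem_Icc.mpr ⟨hdb.1, hdx⟩⟩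
        · rw [List.length_append, hbσ_len, List.length_drop, hB_len]
          omega
      · have hap_mem : bodyσ.getD (x - 1) 0 ∈ ws.take γ := by
          rw [gd_eq hxblen]
          exact hbσ_sub.subset (List.getElem_mem _)
        have hb2_mem : B.getD 1 0 ∈ ws.drop γ := by
          have hblen : 0 < (B.drop 1).length := by rw [List.length_drop, hB_len]; omega
          have he : B.getD 1 0 = (B.drop 1)[0]'hblen := by
            rw [← gd_eq hblen, gd_drop]
          rw [he]
          have hmem := hBdrop_sub.subset (List.getElem_mem hblen)
          have he2 : (ws.take c).drop γ = (ws.drop γ).take (c - γ) := List.drop_take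
          rw [he2] at hmem
          exact List.take_subset _ _ hmem
        have hne := ne_of_take_drop hs hap_mem hb2_mem
        have hgt : B.getD 1 0 < bodyσ.getD (x - 1) 0 := by omega
        by_cases hcase1 : B.getD 0 0 < bodyσ.getD (x - 1 - 1) 0
        · refine ⟨bodyσ.take (x - 1) ++ B, glue_sublist (a := γ - 1) ?_ hB_home, ?_, ?_⟩
          · rw [List.take_take, min_eq_left (by omega : γ - 1 ≤ c)]
            exact hbody_take
          · ext d
            rw [mem_desSet_append (by rw [hulen]; omega) (by omega)]
            rw [hulen, hdtake]
            constructor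
            · rintro (hd | ⟨hd1, hd2⟩ | ⟨hd1, hd2⟩)
              · exact (Finset.mem_inter.mp hd).1
              · exact hd1 ▸ hx1D
              · exfalso
                rw [desSet_of_sorted_lt hB_sorted] at hd2
                exact absurd hd2 (Finset.notMem_empty _)
            · intro hd
              have hdb := hDIcc hd
              rw [Finset.mem_Icc] at hdb
              have hdx : d ≤ x - 1 := by
                by_contra hcon
                exact hxD ((hprop d (by omega) (by omega)).mp hd)
              rcases Nat.eq_or_lt_of_le hdx with heq | hlt2
              · right; left
                refine ⟨heq, ?_⟩
                rw [gd_take (by omega : x - 1 - 1 < x - 1)]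
                exact hcase1
              · left
                exact Finset.mem_inter.mpr ⟨hd, Finset.mem_Icc.mpr ⟨hdb.1, by omega⟩⟩
          · rw [List.length_append, hulen, hB_len]
            omega
        · exfalso
          have hap1_mem : bodyσ.getD (x - 1 - 1) 0 ∈ ws.take (γ - 1) := by
            have hb : x - 1 - 1 < (bodyσ.take (x - 1)).length := by rw [hulen]; omega
            have he : bodyσ.getD (x - 1 - 1) 0 = (bodyσ.take (x - 1))[x - 1 - 1]'hb := by
              rw [← gd_eq hb, gd_take (by omega)]
            rw [he]
            exact hbody_take.subset (List.getElem_mem _)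
          have hb1_mem : B.getD 0 0 ∈ ws.drop (γ - 1) := by
            have hb : 0 < B.length := by omega
            rw [gd_eq hb]
            have hmem := hB_home.subset (List.getElem_mem hb)
            have he2 : (ws.take c).drop (γ - 1) = (ws.drop (γ - 1)).take (c - (γ - 1)) :=
              List.drop_take
            rw [he2] at hmem
            exact List.take_subset _ _ hmem
          have hne1 := ne_of_take_drop hs hap1_mem hb1_mem
          omega


end StmtAux

theorem stmt17 (n : ℕ) (π σ : Equiv.Perm (Fin n)) :
    (∀ D : Finset ℕ, D ⊆ Finset.Icc 1 (n - 1) → lsD (word π) D = lsD (word σ) D) ↔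
      (∀ i j : ℕ, 1 ≤ i → i ≤ j → j ≤ n →
        lis (factor (word π) i j) = lis (factor (word σ) i j) ∧
          lds (factor (word π) i j) = lds (factor (word σ) i j)) := by
  have hlp : (word π).length = n := by simp [word]
  have hls : (word σ).length = n := by simp [word]
  have hnp : (word π).Nodup := by
    rw [word, List.nodup_ofFn]
    exact Fin.val_injective.comp π.injective
  have hns : (word σ).Nodup := by
    rw [word, List.nodup_ofFn]
    exact Fin.val_injective.comp σ.injective
  constructor
  · intro h i j hi hij hj
    have Heq : ∀ D : Finset ℕ, D ⊆ Finset.Icc 1 ((word π).length - 1) →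
        lsD (word π) D = lsD (word σ) D := by
      rw [hlp]; exact h
    have Heq' : ∀ D : Finset ℕ, D ⊆ Finset.Icc 1 ((word σ).length - 1) →
        lsD (word σ) D = lsD (word π) D := by
      rw [hls]
      intro D hD
      exact (h D hD).symm
    constructor
    · apply _root_.le_antisymm
      · exact StmtAux.lis_factor_le hns (by rw [hlp, hls]) Heq hi hij (by rw [hlp]; exact hj)
      · exact StmtAux.lis_factor_le hnp (by rw [hls, hlp]) Heq' hi hij (by rw [hls]; exact hj)
    · apply _root_.le_antisymm
      · exact StmtAux.lds_factor_le hns (by rw [hlp, hls]) Heq hi hij (by rw [hlp]; exact hj)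
      · exact StmtAux.lds_factor_le hnp (by rw [hls, hlp]) Heq' hi hij (by rw [hls]; exact hj)
  · intro h D hD
    have H : ∀ a b : ℕ, 1 ≤ a → a ≤ b → b ≤ (word π).length →
        lis (factor (word π) a b) = lis (factor (word σ) a b) ∧
          lds (factor (word π) a b) = lds (factor (word σ) a b) := by
      rw [hlp]; exact h
    have H' : ∀ a b : ℕ, 1 ≤ a → a ≤ b → b ≤ (word σ).length →
        lis (factor (word σ) a b) = lis (factor (word π) a b) ∧
          lds (factor (word σ) a b) = lds (factor (word π) a b) := by
      rw [hls]
      intro a b h1 h2 h3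
      exact ⟨(h a b h1 h2 h3).1.symm, (h a b h1 h2 h3).2.symm⟩
    apply _root_.le_antisymm
    · rcases Nat.eq_zero_or_pos (lsD (word π) D) with h0 | hpos
      · rw [h0]; exact Nat.zero_le _
      · obtain ⟨s, hsub, hdes, hslen⟩ := StmtAux.exists_of_le_lsD hpos le_rfl
        obtain ⟨t, ht_sub, ht_des, ht_len⟩ :=
          StmtAux.transfer hnp hns (by rw [hlp, hls]) H s.length ((word π).length) D s
            le_rfl (by rw [List.take_length]; exact hsub) hdes rfl
        have he : (word σ).take ((word π).length) = word σ :=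
          List.take_of_length_le (by omega)
        rw [he] at ht_sub
        have hfin : t.length ≤ lsD (word σ) D := ht_des ▸ StmtAux.le_lsD ht_sub
        omega
    · rcases Nat.eq_zero_or_pos (lsD (word σ) D) with h0 | hpos
      · rw [h0]; exact Nat.zero_le _
      · obtain ⟨s, hsub, hdes, hslen⟩ := StmtAux.exists_of_le_lsD hpos le_rfl
        obtain ⟨t, ht_sub, ht_des, ht_len⟩ :=
          StmtAux.transfer hns hnp (by rw [hlp, hls]) H' s.length ((word σ).length) D s
            le_rfl (by rw [List.take_length]; exact hsub) hdes rfl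
        have he : (word π).take ((word σ).length) = word π :=
          List.take_of_length_le (by omega)
        rw [he] at ht_sub
        have hfin : t.length ≤ lsD (word π) D := ht_des ▸ StmtAux.le_lsD ht_sub
        omega
end
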